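/- arXiv:2104.14793 — 6 statements merged into one kernel-verified Lean document; each statement's English description precedes it below -/
import Mathlib

section
/- Let L : ℝ × ℝⁿ × ℝⁿ → ℝ be smooth and let q : ℝ → ℝⁿ be a smooth solution of the Euler–Lagrange equation d/dt[∂_{q̇}L(t,q(t),q̇(t))] = ∂_q L(t,q(t),q̇(t)). Let q_λ(t) be a smooth family of curves (smooth in (λ,t)) with q_0(t) = q(t) for all t. Then the function t ↦ ∂_{q̇}L(t,q(t),q̇(t)) · ∂_λ q_λ(t)|_{λ=0} − ∫_{t₀}^{t} ∂_λ L(s,q_λ(s),q̇_λ(s))|_{λ=0} ds is constant in t. -/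
open scoped RealInnerProductSpace
open InnerProductSpace ContinuousLinearMap

noncomputable section

namespace Stmt0Aux

variable {F : Type*} [NormedAddCommGroup F] [NormedSpace ℝ F]

lemma hasDerivAt_fst {f : ℝ × ℝ → F} {a b : ℝ} (hf : DifferentiableAt ℝ f (a, b)) :
    HasDerivAt (fun l => f (l, b)) (fderiv ℝ f (a, b) (1, 0)) a :=
  hf.hasFDerivAt.comp_hasDerivAt a ((hasDerivAt_id a).prodMk (hasDerivAt_const a b))

lemma hasDerivAt_snd {f : ℝ × ℝ → F} {a b : ℝ} (hf : DifferentiableAt ℝ f (a, b)) :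
    HasDerivAt (fun t => f (a, t)) (fderiv ℝ f (a, b) (0, 1)) b :=
  hf.hasFDerivAt.comp_hasDerivAt b ((hasDerivAt_const b a).prodMk (hasDerivAt_id b))

variable {G : Type*} [NormedAddCommGroup G] [InnerProductSpace ℝ G] [CompleteSpace G]

def Jv : G →L[ℝ] ℝ × G × G :=
  (0 : G →L[ℝ] ℝ).prod ((0 : G →L[ℝ] G).prod (ContinuousLinearMap.id ℝ G))

def Jx : G →L[ℝ] ℝ × G × G :=
  (0 : G →L[ℝ] ℝ).prod ((ContinuousLinearMap.id ℝ G).prod (0 : G →L[ℝ] G))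

lemma grad_v_eq {Lf : ℝ × G × G → ℝ} (hLf : Differentiable ℝ Lf) (t : ℝ) (x v : G) :
    gradient (fun w => Lf (t, x, w)) v
      = (toDual ℝ G).symm ((fderiv ℝ Lf (t, x, v)).comp Jv) := by
  have hj : HasFDerivAt (fun w : G => ((t, x, w) : ℝ × G × G)) Jv v :=
    (hasFDerivAt_const t v).prodMk ((hasFDerivAt_const x v).prodMk (hasFDerivAt_id v))
  exact (((hLf (t, x, v)).hasFDerivAt.comp v hj).hasGradientAt).gradient

lemma grad_x_eq {Lf : ℝ × G × G → ℝ} (hLf : Differentiable ℝ Lf) (t : ℝ) (x v : G) :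
    gradient (fun w => Lf (t, w, v)) x
      = (toDual ℝ G).symm ((fderiv ℝ Lf (t, x, v)).comp Jx) := by
  have hj : HasFDerivAt (fun w : G => ((t, w, v) : ℝ × G × G)) Jx x :=
    (hasFDerivAt_const t x).prodMk ((hasFDerivAt_id x).prodMk (hasFDerivAt_const v x))
  exact (((hLf (t, x, v)).hasFDerivAt.comp x hj).hasGradientAt).gradient

lemma inner_grad_v {Lf : ℝ × G × G → ℝ} (hLf : Differentiable ℝ Lf) (t : ℝ) (x v y : G) :
    ⟪gradient (fun w => Lf (t, x, w)) v, y⟫ = fderiv ℝ Lf (t, x, v) (0, 0, y) := by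
  rw [grad_v_eq hLf, toDual_symm_apply]; rfl

lemma inner_grad_x {Lf : ℝ × G × G → ℝ} (hLf : Differentiable ℝ Lf) (t : ℝ) (x v y : G) :
    ⟪gradient (fun w => Lf (t, w, v)) x, y⟫ = fderiv ℝ Lf (t, x, v) (0, y, 0) := by
  rw [grad_x_eq hLf, toDual_symm_apply]; rfl

/-- The main work, stated for a general real inner product space. -/
lemma main {G : Type*} [NormedAddCommGroup G] [InnerProductSpace ℝ G] [CompleteSpace G]
    (L : ℝ → G → G → ℝ)
    (hL : ContDiff ℝ (⊤ : ℕ∞) (fun p : ℝ × G × G => L p.1 p.2.1 p.2.2))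
    (q : ℝ → G) (hq : ContDiff ℝ (⊤ : ℕ∞) q)
    (hEL : ∀ t : ℝ,
      deriv (fun s => gradient (fun v => L s (q s) v) (deriv q s)) t
        = gradient (fun x => L t x (deriv q t)) (q t))
    (Q : ℝ → ℝ → G)
    (hQ : ContDiff ℝ (⊤ : ℕ∞) (fun p : ℝ × ℝ => Q p.1 p.2))
    (hQ0 : ∀ t, Q 0 t = q t)
    (t₀ : ℝ) :
    ∃ c : ℝ, ∀ t : ℝ,
      ⟪gradient (fun v => L t (q t) v) (deriv q t),
        deriv (fun l => Q l t) 0⟫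
      - (∫ s in t₀..t, deriv (fun l => L s (Q l s) (deriv (Q l) s)) 0)
      = c := by
  classical
  set Lf : ℝ × G × G → ℝ := fun p => L p.1 p.2.1 p.2.2 with hLf_def
  set M : ℝ × ℝ → G := fun p => Q p.1 p.2 with hM_def
  have hqQ : Q 0 = q := funext hQ0
  have hMd : Differentiable ℝ M := hQ.differentiable (by simp)
  have hM : ContDiff ℝ (⊤ : ℕ∞) M := hQ
  have hDM : ContDiff ℝ (⊤ : ℕ∞) (fderiv ℝ M) := hM.fderiv_right (by exact_mod_cast le_top)
  have hLd : Differentiable ℝ Lf := hL.differentiable (by simp)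
  have hDL : ContDiff ℝ (⊤ : ℕ∞) (fderiv ℝ Lf) := hL.fderiv_right (by exact_mod_cast le_top)
  -- the variation vector field u t = ∂_λ Q(λ,t)|₀ and its smoothness
  set u : ℝ → G := fun t => fderiv ℝ M (0, t) (1, 0) with hu_def
  have hu_smooth : ContDiff ℝ (⊤ : ℕ∞) u :=
    ((hDM.comp (contDiff_const.prodMk contDiff_id)).clm_apply contDiff_const)
  have hu_at : ∀ t, HasDerivAt (fun l => Q l t) (u t) 0 := fun t => hasDerivAt_fst (hMd (0, t))
  have hu_eq : ∀ t, deriv (fun l => Q l t) 0 = u t := fun t => (hu_at t).deriv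
  -- the velocity field v2 (l,t) = ∂_t Q(l,t)
  set v2 : ℝ × ℝ → G := fun p => fderiv ℝ M p (0, 1) with hv2_def
  have hv2_smooth : ContDiff ℝ (⊤ : ℕ∞) v2 := hDM.clm_apply contDiff_const
  have hv2_at : ∀ l t, HasDerivAt (Q l) (v2 (l, t)) t := fun l t => hasDerivAt_snd (hMd (l, t))
  have hQd : ∀ l t, deriv (Q l) t = v2 (l, t) := fun l t => (hv2_at l t).deriv
  have hqd : ∀ t, deriv q t = v2 (0, t) := by
    intro t; rw [← hqQ]; exact hQd 0 t
  have hqM : ∀ t, q t = M (0, t) := fun t => (hQ0 t).symm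
  -- the smooth curve c t = (t, q t, q̇ t)
  set c : ℝ → ℝ × G × G := fun t => (t, q t, v2 (0, t)) with hc_def
  have hc_smooth : ContDiff ℝ (⊤ : ℕ∞) c :=
    contDiff_id.prodMk ((hq.prodMk (hv2_smooth.comp (contDiff_const.prodMk contDiff_id))))
  have hc_eq : ∀ t, ((t, q t, deriv q t) : ℝ × G × G) = c t := by
    intro t; rw [hc_def]; simp [hqd t]
  -- the momentum p
  set p : ℝ → G := fun t => gradient (fun v => L t (q t) v) (deriv q t) with hp_def
  have hp_eq : ∀ t, p t = (toDual ℝ G).symm ((fderiv ℝ Lf (c t)).comp Jv) := by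
    intro t
    rw [hp_def, ← hc_eq t]
    exact grad_v_eq hLd t (q t) (deriv q t)
  have hp_smooth : ContDiff ℝ (⊤ : ℕ∞) p := by
    have : ContDiff ℝ (⊤ : ℕ∞) fun t => (toDual ℝ G).symm ((fderiv ℝ Lf (c t)).comp Jv) :=
      ((toDual ℝ G).symm.contDiff).comp (((hDL.comp hc_smooth)).clm_comp contDiff_const)
    rw [show p = (fun t => (toDual ℝ G).symm ((fderiv ℝ Lf (c t)).comp Jv)) from funext hp_eq]
    exact this
  have hp_deriv : ∀ t, HasDerivAt p (gradient (fun x => L t x (deriv q t)) (q t)) t := by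
    intro t
    have h1 : HasDerivAt p (deriv p t) t :=
      ((hp_smooth.differentiable (by simp)) t).hasDerivAt
    rwa [hp_def, hEL t] at h1
  -- inner products with the gradients
  have hip : ∀ t (y : G), ⟪p t, y⟫ = fderiv ℝ Lf (c t) (0, 0, y) := by
    intro t y
    rw [hp_def, ← hc_eq t]
    exact inner_grad_v hLd t (q t) (deriv q t) y
  have hix : ∀ t (y : G),
      ⟪gradient (fun x => L t x (deriv q t)) (q t), y⟫ = fderiv ℝ Lf (c t) (0, y, 0) := by
    intro t y
    rw [← hc_eq t]
    exact inner_grad_x hLd t (q t) (deriv q t) y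
  -- w s = ∂_λ ∂_t Q at (0,s)
  set w : ℝ → G := fun s => fderiv ℝ v2 (0, s) (1, 0) with hw_def
  have hw_smooth : ContDiff ℝ (⊤ : ℕ∞) w :=
    (((hv2_smooth.fderiv_right (by exact_mod_cast le_top)).comp (contDiff_const.prodMk contDiff_id)).clm_apply
      contDiff_const)
  have hw_at : ∀ s, HasDerivAt (fun l => v2 (l, s)) (w s) 0 := fun s =>
    hasDerivAt_fst ((hv2_smooth.differentiable (by simp)) (0, s))
  -- symmetry of second derivatives: u' s = w s
  have hu_deriv : ∀ s, HasDerivAt u (w s) s := by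
    intro s
    set A : ℝ × ℝ → G := fun pt => fderiv ℝ M pt (1, 0) with hA_def
    have hA_smooth : ContDiff ℝ (⊤ : ℕ∞) A := hDM.clm_apply contDiff_const
    have h1 : HasDerivAt u (fderiv ℝ A (0, s) (0, 1)) s :=
      hasDerivAt_snd ((hA_smooth.differentiable (by simp)) (0, s))
    have hAf : ∀ (pt : ℝ × ℝ) (z : ℝ × ℝ),
        fderiv ℝ A pt z = (fderiv ℝ (fderiv ℝ M) pt z) ((1 : ℝ), (0 : ℝ)) := by
      intro pt z
      have := ((ContinuousLinearMap.apply ℝ G (((1 : ℝ), (0 : ℝ)) : ℝ × ℝ)).hasFDerivAt.comp pt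
        ((hDM.differentiable (by simp) pt).hasFDerivAt)).fderiv
      rw [hA_def]
      rw [show (fun pt => fderiv ℝ M pt ((1 : ℝ), (0 : ℝ)))
        = (ContinuousLinearMap.apply ℝ G (((1 : ℝ), (0 : ℝ)) : ℝ × ℝ)) ∘ fderiv ℝ M from rfl,
        this]
      rfl
    have hv2f : ∀ (pt : ℝ × ℝ) (z : ℝ × ℝ),
        fderiv ℝ v2 pt z = (fderiv ℝ (fderiv ℝ M) pt z) ((0 : ℝ), (1 : ℝ)) := by
      intro pt z
      have := ((ContinuousLinearMap.apply ℝ G (((0 : ℝ), (1 : ℝ)) : ℝ × ℝ)).hasFDerivAt.comp pt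
        ((hDM.differentiable (by simp) pt).hasFDerivAt)).fderiv
      rw [hv2_def]
      rw [show (fun pt => fderiv ℝ M pt ((0 : ℝ), (1 : ℝ)))
        = (ContinuousLinearMap.apply ℝ G (((0 : ℝ), (1 : ℝ)) : ℝ × ℝ)) ∘ fderiv ℝ M from rfl,
        this]
      rfl
    have hsym : fderiv ℝ (fderiv ℝ M) (0, s) ((0 : ℝ), (1 : ℝ)) ((1 : ℝ), (0 : ℝ))
        = fderiv ℝ (fderiv ℝ M) (0, s) ((1 : ℝ), (0 : ℝ)) ((0 : ℝ), (1 : ℝ)) :=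
      (hM.contDiffAt.isSymmSndFDerivAt (by rw [minSmoothness_of_isRCLikeNormedField]; exact WithTop.coe_le_coe.mpr le_top)) _ _
    have : fderiv ℝ A (0, s) (0, 1) = w s := by
      show fderiv ℝ A (0, s) (0, 1) = fderiv ℝ v2 (0, s) (1, 0)
      rw [hAf, hv2f, hsym]
    rwa [this] at h1
  -- g, the integrand
  set g : ℝ → ℝ := fun s => fderiv ℝ Lf (c s) (0, u s, w s) with hg_def
  have hg_smooth : ContDiff ℝ (⊤ : ℕ∞) g :=
    (hDL.comp hc_smooth).clm_apply
      (contDiff_const.prodMk (hu_smooth.prodMk hw_smooth))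
  have hg_at : ∀ s, HasDerivAt (fun l => L s (Q l s) (deriv (Q l) s)) (g s) 0 := by
    intro s
    have h1 : (fun l => L s (Q l s) (deriv (Q l) s))
        = fun l => Lf (s, M (l, s), v2 (l, s)) := by
      funext l
      rw [hQd l s]
    rw [h1]
    have htr : HasDerivAt (fun l => ((s, M (l, s), v2 (l, s)) : ℝ × G × G))
        (((0 : ℝ), u s, w s)) 0 :=
      (hasDerivAt_const 0 s).prodMk ((hu_at s).prodMk (hw_at s))
    have h2 := (hLd ((s, M (0, s), v2 (0, s)) : ℝ × G × G)).hasFDerivAt.comp_hasDerivAt 0 htr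
    have h3 : ((s, M (0, s), v2 (0, s)) : ℝ × G × G) = c s := by
      rw [hc_def, ← hqM s]
    rwa [h3] at h2
  have hg_eq : ∀ s, deriv (fun l => L s (Q l s) (deriv (Q l) s)) 0 = g s :=
    fun s => (hg_at s).deriv
  -- derivative of the boundary term equals g
  have hbd : ∀ t, HasDerivAt (fun t => ⟪p t, u t⟫) (g t) t := by
    intro t
    have h1 := HasDerivAt.inner ℝ (hp_deriv t) (hu_deriv t)
    have h2 : ⟪p t, w t⟫ + ⟪gradient (fun x => L t x (deriv q t)) (q t), u t⟫ = g t := by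
      show _ = fderiv ℝ Lf (c t) (((0 : ℝ), u t, w t) : ℝ × G × G)
      rw [hip t (w t), hix t (u t)]
      rw [show ((0 : ℝ), u t, w t) = (((0 : ℝ), (0 : G), w t) : ℝ × G × G)
          + (((0 : ℝ), u t, (0 : G)) : ℝ × G × G) by simp [Prod.ext_iff]]
      rw [map_add]
    rwa [h2] at h1
  -- FTC
  have hInt : ∀ t, HasDerivAt (fun t => ∫ s in t₀..t, g s) (g t) t := by
    intro t
    exact intervalIntegral.integral_hasDerivAt_right
      (hg_smooth.continuous.intervalIntegrable _ _)
      (hg_smooth.continuous.stronglyMeasurableAtFilter _ _)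
      hg_smooth.continuous.continuousAt
  -- conclude
  set Fn : ℝ → ℝ := fun t => ⟪p t, u t⟫ - ∫ s in t₀..t, g s with hFn_def
  have hFn : ∀ t, HasDerivAt Fn 0 t := by
    intro t
    have h := (hbd t).sub (hInt t)
    rw [sub_self] at h
    exact h
  have hconst : ∀ t, Fn t = Fn t₀ := fun t =>
    is_const_of_deriv_eq_zero (fun s => (hFn s).differentiableAt)
      (fun s => (hFn s).deriv) t t₀
  refine ⟨Fn t₀, fun t => ?_⟩
  have : (∫ s in t₀..t, deriv (fun l => L s (Q l s) (deriv (Q l) s)) 0) = ∫ s in t₀..t, g s := by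
    congr 1
    exact funext hg_eq
  rw [this, hu_eq t]
  exact hconst t

end Stmt0Aux

end

/-- Theorem 1 (nonlocal constant of motion for second-order Lagrangian systems):
along any solution of the Euler–Lagrange equation and any smooth family of
perturbed motions `Q` with `Q 0 = q`, the function
`t ↦ ∂_{q̇}L · ∂_λ q_λ |_{λ=0} − ∫_{t₀}^t ∂_λ L |_{λ=0}` is constant. -/
theorem stmt_0 {n : ℕ}
    (L : ℝ → EuclideanSpace ℝ (Fin n) → EuclideanSpace ℝ (Fin n) → ℝ)
    (hL : ContDiff ℝ (⊤ : ℕ∞)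
      (fun p : ℝ × EuclideanSpace ℝ (Fin n) × EuclideanSpace ℝ (Fin n) =>
        L p.1 p.2.1 p.2.2))
    (q : ℝ → EuclideanSpace ℝ (Fin n)) (hq : ContDiff ℝ (⊤ : ℕ∞) q)
    (hEL : ∀ t : ℝ,
      deriv (fun s => gradient (fun v => L s (q s) v) (deriv q s)) t
        = gradient (fun x => L t x (deriv q t)) (q t))
    (Q : ℝ → ℝ → EuclideanSpace ℝ (Fin n))
    (hQ : ContDiff ℝ (⊤ : ℕ∞) (fun p : ℝ × ℝ => Q p.1 p.2))
    (hQ0 : ∀ t, Q 0 t = q t)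
    (t₀ : ℝ) :
    ∃ c : ℝ, ∀ t : ℝ,
      ⟪gradient (fun v => L t (q t) v) (deriv q t),
        deriv (fun l => Q l t) 0⟫
      - (∫ s in t₀..t, deriv (fun l => L s (Q l s) (deriv (Q l) s)) 0)
      = c := by
  exact Stmt0Aux.main L hL q hq hEL Q hQ hQ0 t₀
end

section
/- Let m, k > 0 and U : ℝⁿ → ℝ smooth with U ≥ 0. Then every maximal solution of m q̈ = −k q̇ − ∇U(q) is defined for all t ∈ ℝ (global existence in the past and in the future). -/
open Set Filter Topology

noncomputable section

section aux
variable {n : ℕ}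
local notation "E" => EuclideanSpace ℝ (Fin n)

lemma ordConnected_union' {A B : Set ℝ} (hA : A.OrdConnected) (hB : B.OrdConnected)
    {s : ℝ} (hsA : s ∈ A) (hsB : s ∈ B) : (A ∪ B).OrdConnected := by
  constructor
  rintro x (hx | hx) y (hy | hy) z hz
  · exact Or.inl (hA.out hx hy hz)
  · rcases le_total z s with h | h
    · exact Or.inl (hA.out hx hsA ⟨hz.1, h⟩)
    · exact Or.inr (hB.out hsB hy ⟨h, hz.2⟩)
  · rcases le_total z s with h | h
    · exact Or.inr (hB.out hx hsB ⟨hz.1, h⟩)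
    · exact Or.inl (hA.out hsA hy ⟨h, hz.2⟩)
  · exact Or.inr (hB.out hx hy hz)

set_option maxHeartbeats 1000000 in
/-- The extension lemma: a solution on an open ord-connected set bounded above by `b`
with `b` in the closure can be extended past `b`. Works for any sign of `k`. -/
lemma ext_lemma (m k : ℝ) (hm : 0 < m)
    (U : E → ℝ) (hU : ContDiff ℝ (⊤ : ℕ∞) U) (hU0 : ∀ x, 0 ≤ U x)
    (I : Set ℝ) (hIo : IsOpen I) (hIc : I.OrdConnected)
    (q : ℝ → E) (hq : ContDiffOn ℝ 2 q I)
    (hode : ∀ t ∈ I, m • deriv (deriv q) t = -(k • deriv q t) - gradient U (q t))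
    (b : ℝ) (hb : b ∈ closure I) (hIb : I ⊆ Iio b) :
    ∃ J r, IsOpen J ∧ J.OrdConnected ∧ I ⊆ J ∧ b ∈ J ∧ ContDiffOn ℝ 2 r J ∧
      Set.EqOn r q I ∧
      ∀ t ∈ J, m • deriv (deriv r) t = -(k • deriv r t) - gradient U (r t) := by
  have hm' : m ≠ 0 := ne_of_gt hm
  -- the vector field
  have hgrad : ContDiff ℝ (⊤ : ℕ∞) (gradient U) := by
    have h1 : ContDiff ℝ (⊤ : ℕ∞) (fderiv ℝ U) := hU.fderiv_right (by exact_mod_cast le_top)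
    exact ((InnerProductSpace.toDual ℝ E).symm.contDiff).comp h1
  set F : E × E → E × E := fun x => (x.2, -((k/m) • x.2) - m⁻¹ • gradient U x.1) with hFdef
  have hF : ContDiff ℝ (⊤ : ℕ∞) F := by
    refine ContDiff.prodMk contDiff_snd ?_
    exact ((contDiff_snd.const_smul (k/m)).neg).sub
      ((hgrad.comp contDiff_fst).const_smul m⁻¹)
  set c : ℝ → E × E := fun t => (q t, deriv q t) with hcdef
  -- first-order system
  have hq2 : ContDiffOn ℝ ((1 : ℕ) + 1) q I := by exact_mod_cast hq
  rw [contDiffOn_succ_iff_deriv_of_isOpen hIo] at hq2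
  have hqd : ∀ t ∈ I, HasDerivAt q (deriv q t) t :=
    fun t ht => (hq2.1.differentiableAt (hIo.mem_nhds ht)).hasDerivAt
  have hqd2 : ∀ t ∈ I, HasDerivAt (deriv q) (deriv (deriv q) t) t :=
    fun t ht => ((hq2.2.2.differentiableOn (by simp)).differentiableAt (hIo.mem_nhds ht)).hasDerivAt
  have hc : ∀ t ∈ I, HasDerivAt c (F (c t)) t := by
    intro t ht
    have h3 := (hqd t ht).prodMk (hqd2 t ht)
    convert h3 using 2
    have := hode t ht
    have hd2 : deriv (deriv q) t = m⁻¹ • (-(k • deriv q t) - gradient U (q t)) := by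
      rw [← this, smul_smul, inv_mul_cancel₀ hm', one_smul]
    rw [hd2, smul_sub]
    congr 1
    simp only [smul_neg, smul_smul, div_eq_inv_mul]
    rfl
  -- a base point
  have hIne : I.Nonempty := by
    rcases (mem_closure_iff_nhds.1 hb univ univ_mem) with ⟨x, -, hx⟩
    exact ⟨x, hx⟩
  obtain ⟨t₀, ht₀⟩ := hIne
  have ht₀b : t₀ < b := hIb ht₀
  have hIco : Ico t₀ b ⊆ I := by
    rintro t ⟨h1, h2⟩
    rcases mem_closure_iff.1 hb (Ioo t (b+1)) isOpen_Ioo ⟨h2, by linarith⟩ with ⟨s, hs1, hs2⟩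
    exact hIc.out ht₀ hs2 ⟨h1, le_of_lt hs1.1⟩
  -- Energy bound
  set p : ℝ → E := fun t => deriv q t with hpdef
  set Eng : ℝ → ℝ := fun t => (m/2) * ‖p t‖^2 + U (q t) with hEdef
  have hEng0 : ∀ t, 0 ≤ Eng t := by
    intro t
    have := hU0 (q t)
    have : (0:ℝ) ≤ (m/2) * ‖p t‖^2 := by positivity
    simp only [hEdef]
    nlinarith [hU0 (q t)]
  have hinner_grad : ∀ x v : E, inner ℝ (gradient U x) v = fderiv ℝ U x v :=
    fun x v => InnerProductSpace.toDual_symm_apply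
  have hEng' : ∀ t ∈ I, HasDerivAt Eng (-(k * ‖p t‖^2)) t := by
    intro t ht
    have h1 : HasDerivAt q (p t) t := hqd t ht
    have h2 : HasDerivAt p (deriv p t) t := hqd2 t ht
    have hin : HasDerivAt (fun s => (inner ℝ (p s) (p s) : ℝ))
        (inner ℝ (p t) (deriv p t) + inner ℝ (deriv p t) (p t)) t := h2.inner ℝ h2
    have hnorm : HasDerivAt (fun s => ‖p s‖^2)
        (inner ℝ (p t) (deriv p t) + inner ℝ (deriv p t) (p t)) t := by
      refine hin.congr_of_eventuallyEq ?_
      filter_upwards with s using (real_inner_self_eq_norm_sq (p s)).symm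
    have hUq : HasDerivAt (fun s => U (q s)) ((fderiv ℝ U (q t)) (p t)) t :=
      ((hU.differentiable (by simp)).differentiableAt).hasFDerivAt.comp_hasDerivAt
        t h1
    have htot : HasDerivAt Eng ((m/2) * (inner ℝ (p t) (deriv p t) + inner ℝ (deriv p t) (p t))
        + (fderiv ℝ U (q t)) (p t)) t := (hnorm.const_mul (m/2)).add hUq
    convert htot using 1
    -- scalar identity
    have h5 : (inner ℝ (m • deriv p t) (p t) : ℝ)
        = inner ℝ (-(k • p t) - gradient U (q t)) (p t) := by
      rw [show m • deriv p t = -(k • p t) - gradient U (q t) from hode t ht]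
    simp only [real_inner_smul_left, inner_sub_left, inner_neg_left] at h5
    have h6 : (inner ℝ (gradient U (q t)) (p t) : ℝ) = fderiv ℝ U (q t) (p t) :=
      hinner_grad _ _
    have h7 : (inner ℝ (p t) (deriv p t) : ℝ) = inner ℝ (deriv p t) (p t) := real_inner_comm _ _
    have h8 : (inner ℝ (p t) (p t) : ℝ) = ‖p t‖^2 := real_inner_self_eq_norm_sq _
    rw [h7]
    linear_combination -h5 + h6 + k * h8
  -- bound on energy via Gronwall
  set K : ℝ := 2 * |k| / m with hKdef
  have hK0 : 0 ≤ K := by positivity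
  set B : ℝ := Eng t₀ * Real.exp (K * (b - t₀)) with hBdef
  have hEngB : ∀ t ∈ Ico t₀ b, Eng t ≤ B := by
    intro t ⟨ht1, ht2⟩
    have hsub : Icc t₀ t ⊆ I := fun x hx => hIco ⟨hx.1, lt_of_le_of_lt hx.2 ht2⟩
    have hbound : ∀ x ∈ Ico t₀ t, ‖-(k * ‖p x‖^2)‖ ≤ K * ‖Eng x‖ + 0 := by
      intro x hx
      have h1 : ‖-(k * ‖p x‖^2)‖ = |k| * ‖p x‖^2 := by
        rw [norm_neg, Real.norm_eq_abs, abs_mul, abs_of_nonneg (by positivity : (0:ℝ) ≤ ‖p x‖^2)]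
      have h2 : ‖Eng x‖ = Eng x := Real.norm_of_nonneg (hEng0 x)
      rw [h1, h2, hKdef, add_zero]
      have h3 : (m/2) * ‖p x‖^2 ≤ Eng x := by
        simp only [hEdef]
        nlinarith [hU0 (q x)]
      rw [div_mul_eq_mul_div, le_div_iff₀ hm]
      have h4 := mul_le_mul_of_nonneg_left h3 (abs_nonneg k)
      ring_nf
      ring_nf at h4
      linarith
    have hG := norm_le_gronwallBound_of_norm_deriv_right_le
      (f := Eng) (f' := fun x => -(k * ‖p x‖^2)) (δ := Eng t₀) (K := K) (ε := 0)
      (a := t₀) (b := t)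
      (fun x hx => (hEng' x (hsub hx)).continuousAt.continuousWithinAt)
      (fun x hx => (hEng' x (hsub ⟨hx.1, le_of_lt hx.2⟩)).hasDerivWithinAt)
      (le_of_eq (Real.norm_of_nonneg (hEng0 t₀)))
      hbound t ⟨ht1, le_refl t⟩
    have hnt : ‖Eng t‖ = Eng t := Real.norm_of_nonneg (hEng0 t)
    rw [hnt, gronwallBound_ε0] at hG
    refine le_trans hG ?_
    have hexp : Real.exp (K * (t - t₀)) ≤ Real.exp (K * (b - t₀)) := by
      apply Real.exp_le_exp.2
      nlinarith
    exact mul_le_mul_of_nonneg_left hexp (hEng0 t₀)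
  -- velocity bound
  have hB0 : 0 ≤ B := le_trans (hEng0 t₀) (hEngB t₀ ⟨le_refl _, ht₀b⟩)
  set Rp : ℝ := Real.sqrt (2 * B / m) with hRpdef
  have hRp0 : 0 ≤ Rp := Real.sqrt_nonneg _
  have hp_bd : ∀ t ∈ Ico t₀ b, ‖p t‖ ≤ Rp := by
    intro t ht
    have h3 : (m/2) * ‖p t‖^2 ≤ Eng t := by
      simp only [hEdef]; nlinarith [hU0 (q t)]
    have h5 : ‖p t‖^2 ≤ 2*B/m := by
      rw [le_div_iff₀ hm]
      have h9 := hEngB t ht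
      ring_nf
      ring_nf at h3
      linarith
    calc ‖p t‖ = Real.sqrt (‖p t‖^2) := (Real.sqrt_sq (norm_nonneg _)).symm
    _ ≤ Rp := Real.sqrt_le_sqrt h5
  -- position bound
  have hq_bd : ∀ t ∈ Ico t₀ b, ‖q t - q t₀‖ ≤ Rp * (b - t₀) := by
    intro t ht
    have hsub' : Icc t₀ t ⊆ I := fun x hx => hIco ⟨hx.1, lt_of_le_of_lt hx.2 ht.2⟩
    have h6 := Convex.norm_image_sub_le_of_norm_hasDerivWithin_le
      (f := q) (f' := p) (s := Icc t₀ t) (C := Rp)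
      (fun x hx => (hqd x (hsub' hx)).hasDerivWithinAt)
      (fun x hx => hp_bd x ⟨hx.1, lt_of_le_of_lt hx.2 ht.2⟩)
      (convex_Icc _ _) (left_mem_Icc.2 ht.1) (right_mem_Icc.2 ht.1)
    have h7 : ‖t - t₀‖ ≤ b - t₀ := by
      rw [Real.norm_eq_abs, abs_of_nonneg (by linarith [ht.1])]
      linarith [ht.2]
    calc ‖q t - q t₀‖ ≤ Rp * ‖t - t₀‖ := h6
    _ ≤ Rp * (b - t₀) := mul_le_mul_of_nonneg_left h7 hRp0
  -- compact set and bound on F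
  set Kq : Set (E × E) :=
    Metric.closedBall (q t₀) (Rp * (b - t₀)) ×ˢ Metric.closedBall (0:E) Rp with hKqdef
  have hKcomp : IsCompact Kq := (isCompact_closedBall _ _).prod (isCompact_closedBall _ _)
  obtain ⟨M, hM⟩ := hKcomp.exists_bound_of_continuousOn hF.continuous.continuousOn
  have hcK : ∀ t ∈ Ico t₀ b, c t ∈ Kq := by
    intro t ht
    refine ⟨?_, ?_⟩
    · rw [Metric.mem_closedBall, dist_eq_norm]; exact hq_bd t ht
    · rw [Metric.mem_closedBall, dist_eq_norm, sub_zero]; exact hp_bd t ht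
  have hM0 : 0 ≤ M := le_trans (norm_nonneg _) (hM (c t₀) (hcK t₀ ⟨le_refl _, ht₀b⟩))
  -- c is Lipschitz on Ico t₀ b
  have hc_lip : ∀ s ∈ Ico t₀ b, ∀ t ∈ Ico t₀ b, ‖c t - c s‖ ≤ M * ‖t - s‖ := by
    have key : ∀ s ∈ Ico t₀ b, ∀ t ∈ Ico t₀ b, s ≤ t → ‖c t - c s‖ ≤ M * ‖t - s‖ := by
      intro s hs t ht hst
      have hsub' : Icc s t ⊆ Ico t₀ b := fun x hx =>
        ⟨le_trans hs.1 hx.1, lt_of_le_of_lt hx.2 ht.2⟩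
      exact Convex.norm_image_sub_le_of_norm_hasDerivWithin_le
        (f := c) (f' := fun x => F (c x)) (s := Icc s t) (C := M)
        (fun x hx => (hc x (hIco (hsub' hx))).hasDerivWithinAt)
        (fun x hx => hM (c x) (hcK x (hsub' hx)))
        (convex_Icc _ _) (left_mem_Icc.2 hst) (right_mem_Icc.2 hst)
    intro s hs t ht
    rcases le_total s t with h | h
    · exact key s hs t ht h
    · rw [← norm_neg (c t - c s), neg_sub, ← norm_neg (t - s), neg_sub]
      exact key t ht s hs h
  -- limit of c at b from the left
  have hL : ∃ L, Tendsto c (𝓝[<] b) (𝓝 L) := by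
    have hcauchy : Cauchy (Filter.map c (𝓝[<] b)) := by
      rw [Metric.cauchy_iff]
      constructor
      · exact Filter.map_neBot
      · intro ε hε
        set δ : ℝ := min (ε / (M + 1)) (b - t₀) with hδdef
        have hδ0 : 0 < δ := lt_min (by positivity) (by linarith)
        refine ⟨c '' Ioo (b - δ) b, ?_, ?_⟩
        · apply Filter.image_mem_map
          exact Ioo_mem_nhdsLT (by linarith)
        · rintro x ⟨u, hu, rfl⟩ y ⟨v, hv, rfl⟩
          have hu' : u ∈ Ico t₀ b := ⟨by
            have := hu.1
            have hd : δ ≤ b - t₀ := min_le_right _ _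
            linarith, hu.2⟩
          have hv' : v ∈ Ico t₀ b := ⟨by
            have := hv.1
            have hd : δ ≤ b - t₀ := min_le_right _ _
            linarith, hv.2⟩
          have h8 : ‖u - v‖ < δ := by
            rw [Real.norm_eq_abs, abs_lt]
            constructor <;> [linarith [hu.1, hv.2]; linarith [hv.1, hu.2]]
          calc dist (c u) (c v) = ‖c u - c v‖ := dist_eq_norm _ _
          _ ≤ M * ‖u - v‖ := hc_lip v hv' u hu'
          _ ≤ M * δ := mul_le_mul_of_nonneg_left (le_of_lt h8) hM0
          _ ≤ M * (ε / (M + 1)) := mul_le_mul_of_nonneg_left (min_le_left _ _) hM0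
          _ < ε := by
            rw [mul_div_assoc']
            rw [div_lt_iff₀ (by linarith)]
            nlinarith
    obtain ⟨L, hL⟩ := CompleteSpace.complete hcauchy
    exact ⟨L, hL⟩
  obtain ⟨L, hLlim⟩ := hL
  -- extension of c to b
  set cbar : ℝ → E × E := fun t => if t < b then c t else L with hcbardef
  have hcbar_eq : ∀ t < b, cbar t = c t := fun t ht => if_pos ht
  have hcbar_b : cbar b = L := if_neg (lt_irrefl b)
  have hIoo_sub : Ioo t₀ b ⊆ I := fun x hx => hIco ⟨le_of_lt hx.1, hx.2⟩
  have hcbar_der : ∀ t ∈ I, HasDerivAt cbar (F (c t)) t := by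
    intro t ht
    refine (hc t ht).congr_of_eventuallyEq ?_
    filter_upwards [Iio_mem_nhds (hIb ht)] with s hs using hcbar_eq s hs
  have hder_b : HasDerivWithinAt cbar (F L) (Iic b) b := by
    apply hasDerivWithinAt_Iic_of_tendsto_deriv (s := Ioo t₀ b)
    · exact fun t ht => ((hcbar_der t (hIoo_sub ht)).differentiableAt).differentiableWithinAt
    · have h1 : Tendsto c (𝓝[Ioo t₀ b] b) (𝓝 L) :=
        hLlim.mono_left (nhdsWithin_mono _ Ioo_subset_Iio_self)
      have h2 : Tendsto cbar (𝓝[Ioo t₀ b] b) (𝓝 L) := by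
        refine Filter.Tendsto.congr' ?_ h1
        filter_upwards [self_mem_nhdsWithin] with s hs using (hcbar_eq s hs.2).symm
      show Tendsto cbar (𝓝[Ioo t₀ b] b) (𝓝 (cbar b))
      rwa [hcbar_b]
    · exact Ioo_mem_nhdsLT ht₀b
    · have h2 : Tendsto (fun t => F (c t)) (𝓝[<] b) (𝓝 (F L)) :=
        (hF.continuous.tendsto L).comp hLlim
      refine Filter.Tendsto.congr' ?_ h2
      filter_upwards [Ioo_mem_nhdsLT ht₀b] with s hs
        using ((hcbar_der s (hIoo_sub hs)).deriv).symm
  -- local solution at b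
  obtain ⟨g, hgb, ε₀, hε₀, hg⟩ :=
    ContDiffAt.exists_forall_mem_closedBall_exists_eq_forall_mem_Ioo_hasDerivAt₀ (x₀ := L)
      (hF.of_le (by exact_mod_cast le_top)).contDiffAt b
  set ε : ℝ := min ε₀ (b - t₀) with hεdef
  have hε : 0 < ε := lt_min hε₀ (by linarith)
  have hεle : ε ≤ ε₀ := min_le_left _ _
  have hεle' : ε ≤ b - t₀ := min_le_right _ _
  have hg' : ∀ t ∈ Ioo (b - ε) (b + ε), HasDerivAt g (F (g t)) t := by
    intro t ht
    exact hg t ⟨by linarith [ht.1], by linarith [ht.2]⟩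
  have hIoo_left : Ioo (b - ε) b ⊆ I := fun x hx =>
    hIco ⟨by linarith [hx.1], hx.2⟩
  -- the glued solution
  set R : ℝ → E × E := fun t => if t < b then c t else g t with hRdef
  set J : Set ℝ := I ∪ Ioo (b - ε) (b + ε) with hJdef
  have hJo : IsOpen J := hIo.union isOpen_Ioo
  have hbJ : b ∈ J := Or.inr ⟨by linarith, by linarith⟩
  have hIJ : I ⊆ J := subset_union_left
  have hbr : b - ε/2 ∈ I := hIoo_left ⟨by linarith, by linarith⟩
  have hJc : J.OrdConnected :=
    ordConnected_union' hIc ordConnected_Ioo hbr ⟨by linarith, by linarith⟩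
  have hR_eq_c : ∀ t < b, R t = c t := fun t ht => if_pos ht
  have hR_eq_g : ∀ t, b ≤ t → R t = g t := fun t ht => if_neg (not_lt.2 ht)
  have hRb : R b = L := by rw [hR_eq_g b le_rfl, hgb]
  have hR_der : ∀ t ∈ J, HasDerivAt R (F (R t)) t := by
    intro t ht
    rcases lt_trichotomy t b with h | h | h
    · have htI : t ∈ I := by
        rcases ht with h1 | h1
        · exact h1
        · exact hIoo_left ⟨h1.1, h⟩
      have h9 : HasDerivAt R (F (c t)) t := by
        refine (hc t htI).congr_of_eventuallyEq ?_
        filter_upwards [Iio_mem_nhds h] with s hs using hR_eq_c s hs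
      rw [hR_eq_c t h]
      exact h9
    · subst h
      have hleft : HasDerivWithinAt R (F L) (Iic t) t := by
        refine hder_b.congr (fun s hs => ?_) (by rw [hRb, hcbar_b])
        rcases lt_or_eq_of_le (mem_Iic.1 hs) with h1 | h1
        · rw [hR_eq_c s h1, hcbar_eq s h1]
        · subst h1; rw [hRb, hcbar_b]
      have hright : HasDerivWithinAt R (F L) (Ici t) t := by
        have h10 : HasDerivAt g (F (g t)) t := hg' t ⟨by linarith, by linarith⟩
        rw [hgb] at h10
        exact (h10.hasDerivWithinAt).congr (fun s hs => hR_eq_g s hs) (hR_eq_g t le_rfl)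
      have h11 := hleft.union hright
      rw [Iic_union_Ici, hasDerivWithinAt_univ] at h11
      rw [hRb]
      exact h11
    · have htIoo : t ∈ Ioo (b - ε) (b + ε) := by
        rcases ht with h1 | h1
        · exact absurd (hIb h1) (not_lt.2 (le_of_lt h))
        · exact h1
      have h10 : HasDerivAt g (F (g t)) t := hg' t htIoo
      have h9 : HasDerivAt R (F (g t)) t := by
        refine h10.congr_of_eventuallyEq ?_
        filter_upwards [Ioi_mem_nhds h] with s hs using hR_eq_g s (le_of_lt hs)
      rw [hR_eq_g t (le_of_lt h)]
      exact h9
  -- regularity of R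
  have hRC : ∀ N : ℕ, ContDiffOn ℝ N R J := by
    intro N
    induction N with
    | zero =>
      simp only [CharP.cast_eq_zero, contDiffOn_zero]
      exact fun t ht => ((hR_der t ht).differentiableAt.continuousAt).continuousWithinAt
    | succ N ih =>
      have hcast : ((N + 1 : ℕ) : WithTop ℕ∞) = (N : WithTop ℕ∞) + 1 := by push_cast; ring
      rw [hcast, contDiffOn_succ_iff_deriv_of_isOpen hJo]
      refine ⟨fun t ht => (hR_der t ht).differentiableAt.differentiableWithinAt, ?_, ?_⟩
      · intro hcontra; exact absurd hcontra (by simp)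
      · have heq : EqOn (deriv R) (F ∘ R) J := fun t ht => (hR_der t ht).deriv
        exact ContDiffOn.congr ((hF.of_le (by exact_mod_cast le_top)).comp_contDiffOn ih) heq
  -- conclusion
  have hfst : ∀ t ∈ J, HasDerivAt (fun t => (R t).1) ((R t).2) t :=
    fun t ht => (hR_der t ht).fst
  have hderiv1 : ∀ t ∈ J, deriv (fun t => (R t).1) t = (R t).2 :=
    fun t ht => (hfst t ht).deriv
  refine ⟨J, fun t => (R t).1, hJo, hJc, hIJ, hbJ, ?_, ?_, ?_⟩
  · exact (contDiff_fst.of_le le_top).comp_contDiffOn (hRC 2)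
  · intro t ht
    simp only
    rw [hR_eq_c t (hIb ht)]
  · intro t ht
    have hsnd : HasDerivAt (fun s => (R s).2) ((F (R t)).2) t := (hR_der t ht).snd
    have hev : deriv (fun t => (R t).1) =ᶠ[𝓝 t] (fun s => (R s).2) := by
      filter_upwards [hJo.mem_nhds ht] with s hs using hderiv1 s hs
    have h2 : deriv (deriv (fun t => (R t).1)) t = (F (R t)).2 := by
      rw [hev.deriv_eq]; exact hsnd.deriv
    rw [h2, hderiv1 t ht]
    show m • (-((k/m) • (R t).2) - m⁻¹ • gradient U ((R t).1)) = _
    rw [smul_sub]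
    congr 1
    · simp only [smul_neg, smul_smul]
      rw [mul_div_cancel₀ _ hm']
    · rw [smul_smul, mul_inv_cancel₀ hm', one_smul]


lemma neg_preimage_ordConnected {A : Set ℝ} (hA : A.OrdConnected) :
    (Neg.neg ⁻¹' A).OrdConnected := by
  constructor
  intro x hx y hy z hz
  exact hA.out hy hx ⟨neg_le_neg hz.2, neg_le_neg hz.1⟩

lemma deriv2_comp_neg (f : ℝ → E) (t : ℝ) :
    deriv (deriv (fun s => f (-s))) t = deriv (deriv f) (-t) := by
  have h1 : deriv (fun s => f (-s)) = fun s => -deriv f (-s) :=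
    funext fun s => deriv_comp_neg f s
  rw [h1, deriv.fun_neg, deriv_comp_neg, neg_neg]

theorem stmt_6_aux {n : ℕ}
    (m k : ℝ) (hm : 0 < m) (hk : 0 < k)
    (U : EuclideanSpace ℝ (Fin n) → ℝ) (hU : ContDiff ℝ (⊤ : ℕ∞) U)
    (hU0 : ∀ x, 0 ≤ U x)
    (I : Set ℝ) (hIo : IsOpen I) (hIc : I.OrdConnected) (hIne : I.Nonempty)
    (q : ℝ → EuclideanSpace ℝ (Fin n))
    (hq : ContDiffOn ℝ 2 q I)
    (hode : ∀ t ∈ I,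
      m • deriv (deriv q) t = -(k • deriv q t) - gradient U (q t))
    (hmax : ∀ J : Set ℝ, IsOpen J → J.OrdConnected → I ⊆ J →
      ∀ r : ℝ → EuclideanSpace ℝ (Fin n), ContDiffOn ℝ 2 r J →
        Set.EqOn r q I →
        (∀ t ∈ J, m • deriv (deriv r) t = -(k • deriv r t) - gradient U (r t)) →
        J ⊆ I) :
    I = Set.univ := by
  have habove : ¬ BddAbove I := by
    intro hbdd
    set b := sSup I with hbdef
    have hlub : IsLUB I b := isLUB_csSup hIne hbdd
    have hbcl : b ∈ closure I := hlub.mem_closure hIne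
    have hIb : I ⊆ Iio b := by
      intro t ht
      rcases lt_or_eq_of_le (hlub.1 ht) with h | h
      · exact h
      · exfalso
        obtain ⟨δ, hδ0, hδ⟩ := Metric.isOpen_iff.1 hIo t ht
        have hmem : t + δ/2 ∈ I := hδ (by
          rw [Metric.mem_ball, Real.dist_eq, show t + δ/2 - t = δ/2 by ring,
            abs_of_nonneg (by linarith)]
          linarith)
        have h2 := hlub.1 hmem
        rw [← h] at h2
        linarith
    obtain ⟨J, r, hJo, hJc, hIJ, hbJ, hr2, hrq, hrode⟩ :=
      ext_lemma m k hm U hU hU0 I hIo hIc q hq hode b hbcl hIb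
    exact absurd (hIb (hmax J hJo hJc hIJ r hr2 hrq hrode hbJ)) (lt_irrefl b)
  have hbelow : ¬ BddBelow I := by
    intro hbdd
    set I' : Set ℝ := Neg.neg ⁻¹' I with hI'def
    have hI'o : IsOpen I' := hIo.preimage continuous_neg
    have hI'c : I'.OrdConnected := neg_preimage_ordConnected hIc
    set q' := fun t : ℝ => q (-t) with hq'def
    have hq' : ContDiffOn ℝ 2 q' I' :=
      hq.comp contDiff_neg.contDiffOn (fun x hx => hx)
    have hd1 : ∀ t : ℝ, deriv q' t = -deriv q (-t) := fun t => deriv_comp_neg q t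
    have hode' : ∀ t ∈ I', m • deriv (deriv q') t
        = -((-k) • deriv q' t) - gradient U (q' t) := by
      intro t ht
      have h2 : deriv (deriv q') t = deriv (deriv q) (-t) := deriv2_comp_neg q t
      rw [h2, hd1, hode (-t) ht]
      simp [smul_neg, neg_smul]
      rfl
    have hI'ne : I'.Nonempty := by
      obtain ⟨x, hx⟩ := hIne
      exact ⟨-x, show -(-x) ∈ I by rwa [neg_neg]⟩
    have hI'bdd : BddAbove I' := by
      obtain ⟨l, hl⟩ := hbdd
      exact ⟨-l, fun x hx => by
        have h2 := hl (show -x ∈ I from hx)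
        linarith⟩
    set b := sSup I' with hbdef
    have hlub : IsLUB I' b := isLUB_csSup hI'ne hI'bdd
    have hbcl : b ∈ closure I' := hlub.mem_closure hI'ne
    have hI'b : I' ⊆ Iio b := by
      intro t ht
      rcases lt_or_eq_of_le (hlub.1 ht) with h | h
      · exact h
      · exfalso
        obtain ⟨δ, hδ0, hδ⟩ := Metric.isOpen_iff.1 hI'o t ht
        have hmem : t + δ/2 ∈ I' := hδ (by
          rw [Metric.mem_ball, Real.dist_eq, show t + δ/2 - t = δ/2 by ring,
            abs_of_nonneg (by linarith)]
          linarith)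
        have h2 := hlub.1 hmem
        rw [← h] at h2
        linarith
    obtain ⟨J', r', hJ'o, hJ'c, hI'J, hbJ', hr'2, hr'q, hr'ode⟩ :=
      ext_lemma m (-k) hm U hU hU0 I' hI'o hI'c q' hq' hode' b hbcl hI'b
    -- transport back
    set J : Set ℝ := Neg.neg ⁻¹' J' with hJdef
    set r := fun t : ℝ => r' (-t) with hrdef
    have hJo : IsOpen J := hJ'o.preimage continuous_neg
    have hJc : J.OrdConnected := neg_preimage_ordConnected hJ'c
    have hIJ : I ⊆ J := by
      intro t ht
      exact hI'J (show -(-t) ∈ I by rwa [neg_neg])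
    have hr2 : ContDiffOn ℝ 2 r J :=
      hr'2.comp contDiff_neg.contDiffOn (fun x hx => hx)
    have hrq : Set.EqOn r q I := by
      intro t ht
      have h1 : -t ∈ I' := show -(-t) ∈ I by rwa [neg_neg]
      have h2 : r t = q' (-t) := hr'q h1
      simpa [hq'def] using h2
    have hrode : ∀ t ∈ J, m • deriv (deriv r) t = -(k • deriv r t) - gradient U (r t) := by
      intro t ht
      have h2 : deriv (deriv r) t = deriv (deriv r') (-t) := deriv2_comp_neg r' t
      have h1 : deriv r t = -deriv r' (-t) := deriv_comp_neg r' t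
      rw [h2, h1, hr'ode (-t) ht]
      simp [smul_neg, neg_smul]
      rfl
    have hsub := hmax J hJo hJc hIJ r hr2 hrq hrode
    have hbI : -b ∈ I := hsub (show -(-b) ∈ J' by rwa [neg_neg])
    exact absurd (hI'b hbI) (lt_irrefl b)
  ext x
  simp only [mem_univ, iff_true]
  obtain ⟨y, hy, hxy⟩ := not_bddAbove_iff.1 habove x
  obtain ⟨w, hw, hwx⟩ := not_bddBelow_iff.1 hbelow x
  exact hIc.out hw hy ⟨le_of_lt hwx, le_of_lt hxy⟩

end aux

/-- Global existence (Theorem on viscous dissipation): if `m, k > 0` and `U ≥ 0`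
is smooth, every maximal solution of `m q̈ = −k q̇ − ∇U(q)` (a solution on an
open interval that admits no proper extension) is defined on all of `ℝ`. -/
theorem stmt_6 {n : ℕ}
    (m k : ℝ) (hm : 0 < m) (hk : 0 < k)
    (U : EuclideanSpace ℝ (Fin n) → ℝ) (hU : ContDiff ℝ (⊤ : ℕ∞) U)
    (hU0 : ∀ x, 0 ≤ U x)
    (I : Set ℝ) (hIo : IsOpen I) (hIc : I.OrdConnected) (hIne : I.Nonempty)
    (q : ℝ → EuclideanSpace ℝ (Fin n))
    (hq : ContDiffOn ℝ 2 q I)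
    (hode : ∀ t ∈ I,
      m • deriv (deriv q) t = -(k • deriv q t) - gradient U (q t))
    (hmax : ∀ J : Set ℝ, IsOpen J → J.OrdConnected → I ⊆ J →
      ∀ r : ℝ → EuclideanSpace ℝ (Fin n), ContDiffOn ℝ 2 r J →
        Set.EqOn r q I →
        (∀ t ∈ J, m • deriv (deriv r) t = -(k • deriv r t) - gradient U (r t)) →
        J ⊆ I) :
    I = Set.univ := by
  exact stmt_6_aux m k hm hk U hU hU0 I hIo hIc hIne q hq hode hmax
end
end

section
/- Let m, k > 0 and U : ℝⁿ → ℝ smooth, and let q : I → ℝⁿ solve m q̈ = −k q̇ − ∇U(q). Then the function t ↦ e^{2kt/m}( m‖q̇(t)‖² + 2U(q(t)) ) + (4k/m)∫_{t}^{t₀} e^{2ks/m} U(q(s)) ds is constant on I, where t₀ ∈ I is fixed. -/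
open MeasureTheory intervalIntegral Set

local notation "⟪" x ", " y "⟫" => @inner ℝ _ _ x y

/-- The nonlocal constant of motion for viscous dissipation:
`t ↦ e^{2kt/m}( m‖q̇(t)‖² + 2U(q(t)) ) + (4k/m)∫_t^{t₀} e^{2ks/m} U(q(s)) ds`
is constant along solutions of `m q̈ = −k q̇ − ∇U(q)` (no sign assumption on `U`). -/
theorem stmt_7 {n : ℕ}
    (m k : ℝ) (hm : 0 < m) (hk : 0 < k)
    (U : EuclideanSpace ℝ (Fin n) → ℝ) (hU : ContDiff ℝ (⊤ : ℕ∞) U)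
    (I : Set ℝ) (hI : I.OrdConnected)
    (q : ℝ → EuclideanSpace ℝ (Fin n)) (hq : ContDiff ℝ (⊤ : ℕ∞) q)
    (hode : ∀ t ∈ I,
      m • deriv (deriv q) t = -(k • deriv q t) - gradient U (q t))
    (t₀ : ℝ) (ht₀ : t₀ ∈ I) :
    ∃ c : ℝ, ∀ t ∈ I,
      Real.exp (2 * k * t / m) * (m * ‖deriv q t‖ ^ 2 + 2 * U (q t))
        + (4 * k / m) * ∫ s in t..t₀, Real.exp (2 * k * s / m) * U (q s) = c := by
  set F : ℝ → ℝ := fun t =>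
      Real.exp (2 * k * t / m) * (m * ‖deriv q t‖ ^ 2 + 2 * U (q t))
        + (4 * k / m) * ∫ s in t..t₀, Real.exp (2 * k * s / m) * U (q s) with hF
  have hm' : m ≠ 0 := ne_of_gt hm
  have hqd : Differentiable ℝ q := hq.differentiable (by simp)
  have hq' : ContDiff ℝ (⊤ : ℕ∞) (deriv q) := (contDiff_infty_iff_deriv.mp hq).2
  have hq'd : Differentiable ℝ (deriv q) := hq'.differentiable (by simp)
  have hUd : Differentiable ℝ U := hU.differentiable (by simp)
  have hgcont : Continuous fun s : ℝ => Real.exp (2 * k * s / m) * U (q s) :=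
    (Real.continuous_exp.comp (by fun_prop)).mul (hUd.continuous.comp hqd.continuous)
  -- derivative of F is 0 on I
  have key : ∀ t ∈ I, HasDerivAt F 0 t := by
    intro t ht
    -- exponential factor
    have hE : HasDerivAt (fun t : ℝ => Real.exp (2 * k * t / m))
        (Real.exp (2 * k * t / m) * (2 * k / m)) t := by
      have heq : ∀ u : ℝ, 2 * k * u / m = 2 * k / m * u := fun u => by ring
      simp only [heq]
      simpa using ((hasDerivAt_id t).const_mul (2 * k / m)).exp
    -- norm squared term
    have hN : HasDerivAt (fun t => ‖deriv q t‖ ^ 2)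
        (⟪deriv q t, deriv (deriv q) t⟫ + ⟪deriv (deriv q) t, deriv q t⟫) t := by
      have h1 : HasDerivAt (fun t => ⟪deriv q t, deriv q t⟫)
          (⟪deriv q t, deriv (deriv q) t⟫ + ⟪deriv (deriv q) t, deriv q t⟫) t :=
        (hq'd t).hasDerivAt.inner ℝ (hq'd t).hasDerivAt
      simpa only [real_inner_self_eq_norm_sq] using h1
    -- potential term
    have hgr : HasGradientAt U (gradient U (q t)) (q t) := (hUd (q t)).hasGradientAt
    have hUq : HasDerivAt (fun t => U (q t)) ⟪gradient U (q t), deriv q t⟫ t := by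
      have := hgr.hasFDerivAt.comp_hasDerivAt t (hqd t).hasDerivAt
      simp [InnerProductSpace.toDual_apply_apply] at this ⊢; exact this
    -- integral term
    have hInt : HasDerivAt (fun t => ∫ s in t..t₀, Real.exp (2 * k * s / m) * U (q s))
        (-(Real.exp (2 * k * t / m) * U (q t))) t := by
      have h1 := (hgcont.integral_hasStrictDerivAt t₀ t).hasDerivAt.neg
      have h2 : (fun u => -∫ s in t₀..u, Real.exp (2 * k * s / m) * U (q s))
          = fun u => ∫ s in u..t₀, Real.exp (2 * k * s / m) * U (q s) := by
        funext u; rw [intervalIntegral.integral_symm, neg_neg]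
      rw [← h2]; exact h1
    have hodet := hode t ht
    -- assemble
    have hsum :
        HasDerivAt F
          (Real.exp (2 * k * t / m) * (2 * k / m) * (m * ‖deriv q t‖ ^ 2 + 2 * U (q t))
            + Real.exp (2 * k * t / m) *
              (m * (⟪deriv q t, deriv (deriv q) t⟫ + ⟪deriv (deriv q) t, deriv q t⟫)
                + 2 * ⟪gradient U (q t), deriv q t⟫)
            + (4 * k / m) * -(Real.exp (2 * k * t / m) * U (q t))) t := by
      exact (hE.mul ((hN.const_mul m).add (hUq.const_mul 2))).add (hInt.const_mul (4 * k / m))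
    convert hsum using 1
    -- show the derivative expression is 0, using the ODE
    have hip : ⟪deriv (deriv q) t, deriv q t⟫
        = (-(k * ‖deriv q t‖ ^ 2) - ⟪gradient U (q t), deriv q t⟫) / m := by
      have := congrArg (fun v : EuclideanSpace ℝ (Fin n) => ⟪v, deriv q t⟫) hodet
      simp only [real_inner_smul_left, inner_sub_left, inner_neg_left,
        real_inner_self_eq_norm_sq] at this
      field_simp at this ⊢
      linarith
    have hsym : ⟪deriv q t, deriv (deriv q) t⟫ = ⟪deriv (deriv q) t, deriv q t⟫ :=
      real_inner_comm _ _
    rw [hsym, hip]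
    field_simp
    ring
  -- constancy from zero derivative on the ord-connected set I
  refine ⟨F t₀, fun t ht => ?_⟩
  have hconst : ∀ a b : ℝ, a ∈ I → b ∈ I → a ≤ b → F b = F a := by
    intro a b ha hb hab
    have hsub : Icc a b ⊆ I := hI.out ha hb
    have hcont : ContinuousOn F (Icc a b) := fun x hx =>
      ((key x (hsub hx)).continuousAt).continuousWithinAt
    exact constant_of_has_deriv_right_zero hcont
      (fun x hx => ((key x (hsub (Ico_subset_Icc_self hx))).hasDerivWithinAt)) b
      (right_mem_Icc.mpr hab)
  rcases le_total t t₀ with h | h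
  · exact (hconst t t₀ ht ht₀ h).symm
  · exact hconst t₀ t ht₀ ht h
end

section
/- Let L : ℝ × (ℝⁿ)^{N+1} → ℝ be smooth (arguments t, q, q⁽¹⁾, …, q⁽ᴺ⁾) and let q : ℝ → ℝⁿ be a smooth solution of the higher-order Euler–Lagrange equation ∑_{k=0}^{N} (−1)^k (d/dt)^k ∂_{q^{(k)}} L(t,q,…,q⁽ᴺ⁾) = 0. Let q_λ(t) be a smooth family with q_0 = q. Then the function t ↦ ∑_{j=1}^{N} ∑_{k=0}^{j−1} (−1)^k (d/dt)^k[∂_{q^{(j)}} L(t,q,…,q⁽ᴺ⁾)] · ∂_λ q_λ^{(j−k−1)}(t)|_{λ=0} − ∫_{t₀}^{t} ∂_λ L(s,q_λ,…,q_λ⁽ᴺ⁾)|_{λ=0} ds is constant in t. -/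
open scoped RealInnerProductSpace

namespace Scomp

variable {F : Type*} [NormedAddCommGroup F] [NormedSpace ℝ F]

lemma contDiff_iteratedDeriv {f : ℝ → F} (hf : ContDiff ℝ (⊤ : ℕ∞) f) (m : ℕ) :
    ContDiff ℝ (⊤ : ℕ∞) (iteratedDeriv m f) := by
  rw [iteratedDeriv_eq_iterate]
  exact hf.iterate_deriv m

/-- partial derivative in the first slot of a two-variable function, as HasDerivAt. -/
lemma hasDerivAt_fst {F2 : ℝ × ℝ → F} {p : ℝ × ℝ} {D : ℝ × ℝ →L[ℝ] F}
    (h : HasFDerivAt F2 D p) :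
    HasDerivAt (fun l => F2 (l, p.2)) (D (1, 0)) p.1 := by
  have h1 : HasDerivAt (fun l : ℝ => (l, p.2)) ((1 : ℝ), (0 : ℝ)) p.1 :=
    (hasDerivAt_id p.1).prodMk (hasDerivAt_const p.1 p.2)
  exact h.comp_hasDerivAt p.1 h1

lemma hasDerivAt_snd {F2 : ℝ × ℝ → F} {p : ℝ × ℝ} {D : ℝ × ℝ →L[ℝ] F}
    (h : HasFDerivAt F2 D p) :
    HasDerivAt (fun s => F2 (p.1, s)) (D (0, 1)) p.2 := by
  have h1 : HasDerivAt (fun s : ℝ => (p.1, s)) ((0 : ℝ), (1 : ℝ)) p.2 :=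
    (hasDerivAt_const p.2 p.1).prodMk (hasDerivAt_id p.2)
  exact h.comp_hasDerivAt p.2 h1


variable {F : Type*} [NormedAddCommGroup F] [NormedSpace ℝ F]

/-- joint smoothness of the iterated time-derivative of a smooth family -/
lemma contDiff_W {Q : ℝ → ℝ → F} (hQ : ContDiff ℝ (⊤ : ℕ∞) (fun p : ℝ × ℝ => Q p.1 p.2))
    (m : ℕ) : ContDiff ℝ (⊤ : ℕ∞) (fun p : ℝ × ℝ => iteratedDeriv m (Q p.1) p.2) := by
  induction m with
  | zero => simpa using hQ
  | succ m ih =>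
    have h1 : ContDiff ℝ (⊤ : ℕ∞)
        (fun p : ℝ × ℝ => fderiv ℝ (fun s => iteratedDeriv m (Q p.1) s) p.2) := by
      apply ContDiff.fderiv (f := fun (p : ℝ × ℝ) (s : ℝ) => iteratedDeriv m (Q p.1) s)
        (g := fun p : ℝ × ℝ => p.2)
      · have : ContDiff ℝ (⊤ : ℕ∞) (fun r : (ℝ × ℝ) × ℝ => (r.1.1, r.2)) :=
          (contDiff_fst.fst).prodMk contDiff_snd
        exact ih.comp this
      · exact contDiff_snd
      · simp
    have h2 : (fun p : ℝ × ℝ => iteratedDeriv (m + 1) (Q p.1) p.2) =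
        fun p : ℝ × ℝ => (fderiv ℝ (fun s => iteratedDeriv m (Q p.1) s) p.2) 1 := by
      funext p
      rw [iteratedDeriv_succ]
      exact (fderiv_apply_one_eq_deriv).symm
    rw [h2]
    exact h1.clm_apply contDiff_const

end Scomp

namespace Scomp

variable {F : Type*} [NormedAddCommGroup F] [NormedSpace ℝ F]

/-- the variation field: ∂_λ at λ = 0 of the m-th time derivative of the family. -/
noncomputable def uvar (Q : ℝ → ℝ → F) (m : ℕ) (t : ℝ) : F :=
  deriv (fun l => iteratedDeriv m (Q l) t) 0

variable {Q : ℝ → ℝ → F} (hQ : ContDiff ℝ (⊤ : ℕ∞) (fun p : ℝ × ℝ => Q p.1 p.2))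

include hQ

lemma hasDerivAt_uvar_l (m : ℕ) (t : ℝ) :
    HasDerivAt (fun l => iteratedDeriv m (Q l) t) (uvar Q m t) 0 := by
  have hW := contDiff_W hQ m
  have hd : DifferentiableAt ℝ (fun l => iteratedDeriv m (Q l) t) 0 := by
    have : DifferentiableAt ℝ ((fun p : ℝ × ℝ => iteratedDeriv m (Q p.1) p.2) ∘
        fun l : ℝ => (l, t)) 0 :=
      ((hW.differentiable (by simp)) _).comp 0 (differentiableAt_id.prodMk (differentiableAt_const t))
    exact this
  exact hd.hasDerivAt

lemma uvar_eq_fderiv (m : ℕ) (t : ℝ) :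
    uvar Q m t = fderiv ℝ (fun p : ℝ × ℝ => iteratedDeriv m (Q p.1) p.2) (0, t) (1, 0) := by
  have hW := contDiff_W hQ m
  have h1 : HasDerivAt (fun l => iteratedDeriv m (Q l) t)
      (fderiv ℝ (fun p : ℝ × ℝ => iteratedDeriv m (Q p.1) p.2) (0, t) (1, 0)) 0 :=
    hasDerivAt_fst (p := ((0 : ℝ), t)) ((hW.differentiable (by simp)) _).hasFDerivAt
  exact (hasDerivAt_uvar_l hQ m t).unique h1

lemma W_succ_eq (m : ℕ) (p : ℝ × ℝ) :
    fderiv ℝ (fun p : ℝ × ℝ => iteratedDeriv m (Q p.1) p.2) p (0, 1) =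
      iteratedDeriv (m + 1) (Q p.1) p.2 := by
  have hW := contDiff_W hQ m
  have h1 : HasDerivAt (fun s => iteratedDeriv m (Q p.1) s)
      (fderiv ℝ (fun p : ℝ × ℝ => iteratedDeriv m (Q p.1) p.2) p (0, 1)) p.2 :=
    hasDerivAt_snd ((hW.differentiable (by simp)) _).hasFDerivAt
  rw [iteratedDeriv_succ]
  exact (h1.deriv).symm

lemma schwarz_uvar (m : ℕ) (t : ℝ) : HasDerivAt (uvar Q m) (uvar Q (m + 1) t) t := by
  set W : ℝ × ℝ → F := fun p => iteratedDeriv m (Q p.1) p.2 with hWdef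
  have hW := contDiff_W hQ m
  set F' : ℝ × ℝ → (ℝ × ℝ →L[ℝ] F) := fderiv ℝ W with hF'def
  have hF' : ContDiff ℝ (⊤ : ℕ∞) F' := hW.fderiv_right (by simp)
  have hfd : ∀ y, HasFDerivAt W (F' y) y := fun y =>
    ((hW.differentiable (by simp)) y).hasFDerivAt
  have hx : HasFDerivAt F' (fderiv ℝ F' (0, t)) (0, t) :=
    ((hF'.differentiable (by simp)) _).hasFDerivAt
  -- the function t ↦ uvar Q m t is t ↦ F' (0,t) (1,0)
  have hfun : uvar Q m = fun s => F' (0, s) (1, 0) := by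
    funext s; exact uvar_eq_fderiv hQ m s
  have step1 : HasDerivAt (fun s => F' (0, s)) (fderiv ℝ F' (0, t) (0, 1)) t :=
    hasDerivAt_snd (p := ((0 : ℝ), t)) hx
  have step2 : HasDerivAt (fun s => F' (0, s) (1, 0))
      (fderiv ℝ F' (0, t) (0, 1) (1, 0)) t := by
    simpa using step1.clm_apply (hasDerivAt_const t ((1 : ℝ), (0 : ℝ)))
  -- identify the derivative with uvar Q (m+1) t via symmetry of second derivatives
  have hsym := second_derivative_symmetric hfd hx (0, 1) (1, 0)
  have step3 : HasDerivAt (fun l => F' (l, t) (0, 1))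
      (fderiv ℝ F' (0, t) (1, 0) (0, 1)) 0 := by
    simpa using (hasDerivAt_fst (p := ((0 : ℝ), t)) hx).clm_apply
      (hasDerivAt_const (0 : ℝ) ((0 : ℝ), (1 : ℝ)))
  have hW1eq : (fun l => F' (l, t) (0, 1)) = fun l => iteratedDeriv (m + 1) (Q l) t := by
    funext l; exact W_succ_eq hQ m (l, t)
  rw [hW1eq] at step3
  have hval : fderiv ℝ F' (0, t) (1, 0) (0, 1) = uvar Q (m + 1) t :=
    step3.unique (hasDerivAt_uvar_l hQ (m + 1) t)
  have : HasDerivAt (fun s => F' (0, s) (1, 0)) (uvar Q (m + 1) t) t := by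
    rw [← hval, ← hsym]; exact step2
  rw [hfun]; exact this


end Scomp
namespace Scomp
section Grad

variable {n N : ℕ}

/-- inclusion of the j-th block -/
noncomputable def sigmaCLM (n N : ℕ) (j : Fin (N + 1)) :
    EuclideanSpace ℝ (Fin n) →L[ℝ] (Fin (N + 1) → EuclideanSpace ℝ (Fin n)) :=
  ContinuousLinearMap.pi
    (fun i => if i = j then ContinuousLinearMap.id ℝ (EuclideanSpace ℝ (Fin n)) else 0)

lemma sigmaCLM_apply (j : Fin (N + 1)) (w : EuclideanSpace ℝ (Fin n)) :
    sigmaCLM n N j w = Pi.single j w := by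
  funext i
  simp only [sigmaCLM, ContinuousLinearMap.pi_apply, Pi.single_apply]
  by_cases h : i = j <;> simp [h]

noncomputable def ACLM (n N : ℕ) (j : Fin (N + 1)) :
    EuclideanSpace ℝ (Fin n) →L[ℝ] ℝ × (Fin (N + 1) → EuclideanSpace ℝ (Fin n)) :=
  (ContinuousLinearMap.inr ℝ ℝ _).comp (sigmaCLM n N j)

lemma update_eq (x : Fin (N + 1) → EuclideanSpace ℝ (Fin n)) (j : Fin (N + 1))
    (y : EuclideanSpace ℝ (Fin n)) :
    Function.update x j y = x + sigmaCLM n N j (y - x j) := by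
  funext i
  rw [sigmaCLM_apply]
  by_cases h : i = j
  · subst h; simp
  · simp [Function.update_apply, h, Pi.single_apply]

variable (L : ℝ → (Fin (N + 1) → EuclideanSpace ℝ (Fin n)) → ℝ)

lemma hasFDerivAt_update
    (hL : ContDiff ℝ (⊤ : ℕ∞)
      (fun p : ℝ × (Fin (N + 1) → EuclideanSpace ℝ (Fin n)) => L p.1 p.2))
    (t : ℝ) (x : Fin (N + 1) → EuclideanSpace ℝ (Fin n)) (j : Fin (N + 1)) :
    HasFDerivAt (fun y : EuclideanSpace ℝ (Fin n) => L t (Function.update x j y))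
      ((fderiv ℝ (fun p : ℝ × (Fin (N + 1) → EuclideanSpace ℝ (Fin n)) => L p.1 p.2)
        (t, x)).comp (ACLM n N j)) (x j) := by
  have hinner : HasFDerivAt
      (fun y : EuclideanSpace ℝ (Fin n) => ((t, x) + ACLM n N j (y - x j)))
      (ACLM n N j) (x j) := by
    have h1 : HasFDerivAt (fun y : EuclideanSpace ℝ (Fin n) => ACLM n N j (y - x j))
        (ACLM n N j) (x j) := by
      have h0 := ((ACLM n N j).hasFDerivAt (x := x j)).sub_const (ACLM n N j (x j))
      simpa only [map_sub] using h0
    simpa using h1.const_add (t, x)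
  have houter : HasFDerivAt
      (fun p : ℝ × (Fin (N + 1) → EuclideanSpace ℝ (Fin n)) => L p.1 p.2)
      (fderiv ℝ (fun p : ℝ × (Fin (N + 1) → EuclideanSpace ℝ (Fin n)) => L p.1 p.2) (t, x))
      ((t, x) + ACLM n N j ((x j) - x j)) := by
    simpa using ((hL.differentiable (by simp)) (t, x)).hasFDerivAt
  have hcomp := houter.comp (x j) hinner
  refine hcomp.congr_of_eventuallyEq (Filter.Eventually.of_forall fun y => ?_)
  show L t (Function.update x j y) = _
  have hpair : ((t, x) + ACLM n N j (y - x j)) = (t, Function.update x j y) := by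
    apply Prod.ext
    · simp [ACLM]
    · simp only [ACLM, ContinuousLinearMap.comp_apply, ContinuousLinearMap.inr_apply]
      rw [update_eq x j y]; rfl
  simp only [Function.comp_apply, hpair]

end Grad
end Scomp

/-- The gradient of an `N`-th order Lagrangian `L(t, q, q⁽¹⁾, …, q⁽ᴺ⁾)` with
respect to its block argument `q⁽ʲ⁾`, evaluated along the motion `q` at time `t`. -/
noncomputable def pgrad {n N : ℕ}
    (L : ℝ → (Fin (N + 1) → EuclideanSpace ℝ (Fin n)) → ℝ)
    (q : ℝ → EuclideanSpace ℝ (Fin n)) (j : Fin (N + 1)) (t : ℝ) :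
    EuclideanSpace ℝ (Fin n) :=
  gradient
    (fun y => L t (Function.update (fun i : Fin (N + 1) => iteratedDeriv (i : ℕ) q t) j y))
    (iteratedDeriv (j : ℕ) q t)

namespace Scomp
section Grad2

variable {n N : ℕ}
variable (L : ℝ → (Fin (N + 1) → EuclideanSpace ℝ (Fin n)) → ℝ)

/-- the j-th block partial gradient as a function of (t, x) -/
noncomputable def G (j : Fin (N + 1))
    (p : ℝ × (Fin (N + 1) → EuclideanSpace ℝ (Fin n))) : EuclideanSpace ℝ (Fin n) :=
  (InnerProductSpace.toDual ℝ (EuclideanSpace ℝ (Fin n))).symm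
    ((fderiv ℝ (fun p : ℝ × (Fin (N + 1) → EuclideanSpace ℝ (Fin n)) => L p.1 p.2) p).comp
      (ACLM n N j))

lemma pgrad_eq
    (hL : ContDiff ℝ (⊤ : ℕ∞)
      (fun p : ℝ × (Fin (N + 1) → EuclideanSpace ℝ (Fin n)) => L p.1 p.2))
    (q : ℝ → EuclideanSpace ℝ (Fin n)) (j : Fin (N + 1)) (t : ℝ) :
    pgrad L q j t = G L j (t, fun i : Fin (N + 1) => iteratedDeriv (i : ℕ) q t) := by
  unfold pgrad gradient G
  congr 1
  exact (hasFDerivAt_update L hL t (fun i : Fin (N + 1) => iteratedDeriv (i : ℕ) q t) j).fderiv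

lemma contDiff_G (j : Fin (N + 1))
    (hL : ContDiff ℝ (⊤ : ℕ∞)
      (fun p : ℝ × (Fin (N + 1) → EuclideanSpace ℝ (Fin n)) => L p.1 p.2)) :
    ContDiff ℝ (⊤ : ℕ∞) (G L j) := by
  have h1 : ContDiff ℝ (⊤ : ℕ∞)
      (fderiv ℝ (fun p : ℝ × (Fin (N + 1) → EuclideanSpace ℝ (Fin n)) => L p.1 p.2)) :=
    hL.fderiv_right (by simp)
  have h2 : ContDiff ℝ (⊤ : ℕ∞)
      (fun p : ℝ × (Fin (N + 1) → EuclideanSpace ℝ (Fin n)) =>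
        ((fderiv ℝ (fun p : ℝ × (Fin (N + 1) → EuclideanSpace ℝ (Fin n)) => L p.1 p.2) p).comp
          (ACLM n N j))) := by
    exact (((ContinuousLinearMap.compL ℝ (EuclideanSpace ℝ (Fin n))
      (ℝ × (Fin (N + 1) → EuclideanSpace ℝ (Fin n))) ℝ).flip (ACLM n N j)).contDiff).comp h1
  exact ((InnerProductSpace.toDual ℝ (EuclideanSpace ℝ (Fin n))).symm.contDiff).comp h2


lemma inner_G (j : Fin (N + 1)) (p : ℝ × (Fin (N + 1) → EuclideanSpace ℝ (Fin n)))
    (w : EuclideanSpace ℝ (Fin n)) :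
    ⟪G L j p, w⟫ =
      fderiv ℝ (fun p : ℝ × (Fin (N + 1) → EuclideanSpace ℝ (Fin n)) => L p.1 p.2) p
        ((0 : ℝ), Pi.single j w) := by
  unfold G
  rw [InnerProductSpace.toDual_symm_apply]
  simp only [ContinuousLinearMap.comp_apply]
  congr 1
  simp only [ACLM, ContinuousLinearMap.comp_apply, ContinuousLinearMap.inr_apply,
    sigmaCLM_apply]

lemma contDiff_pgrad
    (hL : ContDiff ℝ (⊤ : ℕ∞)
      (fun p : ℝ × (Fin (N + 1) → EuclideanSpace ℝ (Fin n)) => L p.1 p.2))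
    (q : ℝ → EuclideanSpace ℝ (Fin n)) (hq : ContDiff ℝ (⊤ : ℕ∞) q) (j : Fin (N + 1)) :
    ContDiff ℝ (⊤ : ℕ∞) (pgrad L q j) := by
  have h : pgrad L q j = fun t => G L j (t, fun i : Fin (N + 1) => iteratedDeriv (i : ℕ) q t) :=
    funext (pgrad_eq L hL q j)
  rw [h]
  exact (contDiff_G L j hL).comp
    (contDiff_id.prodMk (contDiff_pi.mpr fun i => contDiff_iteratedDeriv hq (i : ℕ)))


lemma fderiv_snd_eq_sum
    (hL : ContDiff ℝ (⊤ : ℕ∞)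
      (fun p : ℝ × (Fin (N + 1) → EuclideanSpace ℝ (Fin n)) => L p.1 p.2))
    (q : ℝ → EuclideanSpace ℝ (Fin n)) (t : ℝ)
    (w : Fin (N + 1) → EuclideanSpace ℝ (Fin n)) :
    fderiv ℝ (fun p : ℝ × (Fin (N + 1) → EuclideanSpace ℝ (Fin n)) => L p.1 p.2)
        (t, fun i : Fin (N + 1) => iteratedDeriv (i : ℕ) q t) ((0 : ℝ), w) =
      ∑ j : Fin (N + 1), ⟪pgrad L q j t, w j⟫ := by
  have hw : ((0 : ℝ), w) = ∑ j : Fin (N + 1), (((0 : ℝ), Pi.single j (w j)) :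
      ℝ × (Fin (N + 1) → EuclideanSpace ℝ (Fin n))) := by
    apply Prod.ext
    · rw [Prod.fst_sum]; simp
    · rw [Prod.snd_sum]
      simp only
      exact (Finset.univ_sum_single w).symm
  rw [hw, map_sum]
  refine Finset.sum_congr rfl fun j _ => ?_
  rw [pgrad_eq L hL q j t, inner_G]

lemma integrand_eq
    (hL : ContDiff ℝ (⊤ : ℕ∞)
      (fun p : ℝ × (Fin (N + 1) → EuclideanSpace ℝ (Fin n)) => L p.1 p.2))
    (q : ℝ → EuclideanSpace ℝ (Fin n))
    {Q : ℝ → ℝ → EuclideanSpace ℝ (Fin n)}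
    (hQ : ContDiff ℝ (⊤ : ℕ∞) (fun p : ℝ × ℝ => Q p.1 p.2))
    (hQ0 : Q 0 = q) (t : ℝ) :
    deriv (fun l => L t (fun i : Fin (N + 1) => iteratedDeriv (i : ℕ) (Q l) t)) 0 =
      ∑ j : Fin (N + 1), ⟪pgrad L q j t, uvar Q (j : ℕ) t⟫ := by
  have hpi : HasDerivAt (fun l => (fun i : Fin (N + 1) => iteratedDeriv (i : ℕ) (Q l) t))
      (fun i : Fin (N + 1) => uvar Q (i : ℕ) t) 0 :=
    hasDerivAt_pi.mpr (fun i => hasDerivAt_uvar_l hQ (i : ℕ) t)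
  have h0 : (fun i : Fin (N + 1) => iteratedDeriv (i : ℕ) (Q 0) t) =
      fun i : Fin (N + 1) => iteratedDeriv (i : ℕ) q t := by rw [hQ0]
  have houter : HasFDerivAt
      (fun p : ℝ × (Fin (N + 1) → EuclideanSpace ℝ (Fin n)) => L p.1 p.2)
      (fderiv ℝ (fun p : ℝ × (Fin (N + 1) → EuclideanSpace ℝ (Fin n)) => L p.1 p.2)
        (t, fun i : Fin (N + 1) => iteratedDeriv (i : ℕ) q t))
      (t, fun i : Fin (N + 1) => iteratedDeriv (i : ℕ) (Q 0) t) := by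
    rw [h0]
    exact ((hL.differentiable (by simp)) _).hasFDerivAt
  have hpair : HasDerivAt
      (fun l => ((t, fun i : Fin (N + 1) => iteratedDeriv (i : ℕ) (Q l) t) :
        ℝ × (Fin (N + 1) → EuclideanSpace ℝ (Fin n))))
      (((0 : ℝ), fun i : Fin (N + 1) => uvar Q (i : ℕ) t)) 0 :=
    (hasDerivAt_const 0 t).prodMk hpi
  have hcomp := houter.comp_hasDerivAt 0 hpair
  have : deriv (fun l => L t (fun i : Fin (N + 1) => iteratedDeriv (i : ℕ) (Q l) t)) 0 =
      fderiv ℝ (fun p : ℝ × (Fin (N + 1) → EuclideanSpace ℝ (Fin n)) => L p.1 p.2)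
        (t, fun i : Fin (N + 1) => iteratedDeriv (i : ℕ) q t)
        (((0 : ℝ), fun i : Fin (N + 1) => uvar Q (i : ℕ) t)) := HasDerivAt.deriv hcomp
  rw [this]
  exact fderiv_snd_eq_sum L hL q t _

end Grad2
end Scomp

open Scomp in
/-- Scomparin's theorem (nonlocal constants of motion for higher-order Lagrangians):
along any solution of the `N`-th order Euler–Lagrange equation and any smooth
family of perturbed motions `Q` with `Q 0 = q`, the function
`t ↦ ∑_{j=1}^N ∑_{k=0}^{j−1} (−1)^k (d/dt)^k[∂_{q⁽ʲ⁾}L] · ∂_λ q_λ⁽ʲ⁻ᵏ⁻¹⁾|_{λ=0}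
  − ∫_{t₀}^t ∂_λ L|_{λ=0} ds` is constant. -/
theorem stmt_9 {n N : ℕ}
    (L : ℝ → (Fin (N + 1) → EuclideanSpace ℝ (Fin n)) → ℝ)
    (hL : ContDiff ℝ (⊤ : ℕ∞)
      (fun p : ℝ × (Fin (N + 1) → EuclideanSpace ℝ (Fin n)) => L p.1 p.2))
    (q : ℝ → EuclideanSpace ℝ (Fin n)) (hq : ContDiff ℝ (⊤ : ℕ∞) q)
    (hEL : ∀ t : ℝ,
      ∑ k : Fin (N + 1), ((-1 : ℝ) ^ (k : ℕ)) • iteratedDeriv (k : ℕ) (pgrad L q k) t = 0)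
    (Q : ℝ → ℝ → EuclideanSpace ℝ (Fin n))
    (hQ : ContDiff ℝ (⊤ : ℕ∞) (fun p : ℝ × ℝ => Q p.1 p.2))
    (hQ0 : Q 0 = q)
    (t₀ : ℝ) :
    ∃ c : ℝ, ∀ t : ℝ,
      (∑ j : Fin (N + 1), ∑ k ∈ Finset.range (j : ℕ),
        (-1 : ℝ) ^ k *
          ⟪iteratedDeriv k (pgrad L q j) t,
            deriv (fun l => iteratedDeriv ((j : ℕ) - k - 1) (Q l) t) 0⟫)
      - (∫ s in t₀..t,
          deriv (fun l => L s (fun i : Fin (N + 1) => iteratedDeriv (i : ℕ) (Q l) s)) 0)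
      = c := by
  classical
  have hpj : ∀ j : Fin (N + 1), ContDiff ℝ (⊤ : ℕ∞) (pgrad L q j) :=
    fun j => contDiff_pgrad L hL q hq j
  have hu : ∀ (m : ℕ) (t : ℝ), HasDerivAt (uvar Q m) (uvar Q (m + 1) t) t :=
    fun m t => schwarz_uvar hQ m t
  have hucont : ∀ m : ℕ, Continuous (uvar Q m) := by
    intro m
    have hd : Differentiable ℝ (uvar Q m) := fun t => (hu m t).differentiableAt
    exact hd.continuous
  set g : ℝ → ℝ := fun t => ∑ j : Fin (N + 1), ⟪pgrad L q j t, uvar Q (j : ℕ) t⟫ with hgdef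
  have hgcont : Continuous g := by
    apply continuous_finset_sum
    intro j _
    exact ((hpj j).continuous).inner (hucont (j : ℕ))
  have hint_eq :
      (fun s => deriv (fun l => L s (fun i : Fin (N + 1) => iteratedDeriv (i : ℕ) (Q l) s)) 0)
        = g := funext fun s => integrand_eq L hL q hQ hQ0 s
  set S : ℝ → ℝ := fun t => ∑ j : Fin (N + 1), ∑ k ∈ Finset.range (j : ℕ),
      (-1 : ℝ) ^ k * ⟪iteratedDeriv k (pgrad L q j) t, uvar Q ((j : ℕ) - k - 1) t⟫ with hSdef
  -- derivative of S
  have hSder : ∀ t : ℝ, HasDerivAt S (g t) t := by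
    intro t
    have hj : ∀ j : Fin (N + 1), HasDerivAt
        (fun t => ∑ k ∈ Finset.range (j : ℕ),
          (-1 : ℝ) ^ k * ⟪iteratedDeriv k (pgrad L q j) t, uvar Q ((j : ℕ) - k - 1) t⟫)
        (⟪pgrad L q j t, uvar Q (j : ℕ) t⟫ -
          (-1 : ℝ) ^ (j : ℕ) * ⟪iteratedDeriv (j : ℕ) (pgrad L q j) t, uvar Q 0 t⟫) t := by
      intro j
      set a : ℕ → ℝ := fun k =>
        (-1 : ℝ) ^ k * ⟪iteratedDeriv k (pgrad L q j) t, uvar Q ((j : ℕ) - k) t⟫ with ha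
      have hterm : ∀ k ∈ Finset.range (j : ℕ), HasDerivAt
          (fun t => (-1 : ℝ) ^ k *
            ⟪iteratedDeriv k (pgrad L q j) t, uvar Q ((j : ℕ) - k - 1) t⟫)
          (a k - a (k + 1)) t := by
        intro k hk
        have hklt : k < (j : ℕ) := Finset.mem_range.mp hk
        have hp1 : HasDerivAt (iteratedDeriv k (pgrad L q j))
            (iteratedDeriv (k + 1) (pgrad L q j) t) t := by
          have h' := (((contDiff_iteratedDeriv (hpj j) k).differentiable (by simp)) t).hasDerivAt
          rwa [← iteratedDeriv_succ] at h'
        have hu1 : HasDerivAt (uvar Q ((j : ℕ) - k - 1)) (uvar Q ((j : ℕ) - k) t) t := by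
          have h2 := hu ((j : ℕ) - k - 1) t
          have he : (j : ℕ) - k - 1 + 1 = (j : ℕ) - k := by omega
          rwa [he] at h2
        have hin := (hp1.inner ℝ hu1).const_mul ((-1 : ℝ) ^ k)
        convert hin using 1
        · rfl
        · rfl
        have e1 : (j : ℕ) - (k + 1) = (j : ℕ) - k - 1 := by omega
        simp only [ha, e1, pow_succ]
        ring
      have hsum := HasDerivAt.fun_sum hterm
      have htel : ∑ k ∈ Finset.range (j : ℕ), (a k - a (k + 1)) = a 0 - a (j : ℕ) :=
        Finset.sum_range_sub' a (j : ℕ)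
      rw [htel] at hsum
      have ha0 : a 0 = ⟪pgrad L q j t, uvar Q (j : ℕ) t⟫ := by
        simp [ha, iteratedDeriv_zero]
      have haj : a (j : ℕ) =
          (-1 : ℝ) ^ (j : ℕ) * ⟪iteratedDeriv (j : ℕ) (pgrad L q j) t, uvar Q 0 t⟫ := by
        simp [ha, Nat.sub_self]
      rwa [ha0, haj] at hsum
    have hsumj := HasDerivAt.fun_sum (fun j (_ : j ∈ Finset.univ) => hj j)
    have hz : ∑ j : Fin (N + 1),
        (⟪pgrad L q j t, uvar Q (j : ℕ) t⟫ -
          (-1 : ℝ) ^ (j : ℕ) * ⟪iteratedDeriv (j : ℕ) (pgrad L q j) t, uvar Q 0 t⟫) = g t := by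
      rw [Finset.sum_sub_distrib, hgdef]
      have : ∑ j : Fin (N + 1),
          (-1 : ℝ) ^ (j : ℕ) * ⟪iteratedDeriv (j : ℕ) (pgrad L q j) t, uvar Q 0 t⟫ = 0 := by
        have h1 : ∀ j : Fin (N + 1),
            (-1 : ℝ) ^ (j : ℕ) * ⟪iteratedDeriv (j : ℕ) (pgrad L q j) t, uvar Q 0 t⟫ =
              ⟪((-1 : ℝ) ^ (j : ℕ)) • iteratedDeriv (j : ℕ) (pgrad L q j) t, uvar Q 0 t⟫ := by
          intro j; rw [real_inner_smul_left]
        rw [Finset.sum_congr rfl fun j _ => h1 j, ← sum_inner, hEL t, inner_zero_left]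
      rw [this, sub_zero]
    rw [hz] at hsumj
    exact hsumj
  -- derivative of the integral
  have hIder : ∀ t : ℝ, HasDerivAt (fun t => ∫ s in t₀..t,
      deriv (fun l => L s (fun i : Fin (N + 1) => iteratedDeriv (i : ℕ) (Q l) s)) 0) (g t) t := by
    intro t
    rw [hint_eq]
    exact intervalIntegral.integral_hasDerivAt_right (hgcont.intervalIntegrable t₀ t)
      (hgcont.stronglyMeasurable.stronglyMeasurableAtFilter) hgcont.continuousAt
  -- the conserved quantity
  set Fc : ℝ → ℝ := fun t => S t - ∫ s in t₀..t,
      deriv (fun l => L s (fun i : Fin (N + 1) => iteratedDeriv (i : ℕ) (Q l) s)) 0 with hFdef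
  have hF : ∀ t : ℝ, HasDerivAt Fc 0 t := by
    intro t
    have := (hSder t).sub (hIder t)
    rwa [sub_self] at this
  refine ⟨Fc t₀, fun t => ?_⟩
  have hconst : Fc t = Fc t₀ :=
    is_const_of_deriv_eq_zero (fun x => (hF x).differentiableAt) (fun x => (hF x).deriv) t t₀
  exact hconst
end

section
/- Let w₁, w₂ > 0 and q : ℝ → ℝ be a smooth solution of q⁽⁴⁾ + (w₁² + w₂²) q̈ + w₁²w₂² q = 0. Then K₂(t) = (1/2)[ (w₁⁴ + w₁²w₂² + w₂⁴) q̇(t)² + q⁽³⁾(t)² + 2w₁²w₂² q(t) q̈(t) + (w₁² + w₂²)( 2 q⁽³⁾(t) q̇(t) + w₁²w₂² q(t)² ) ] is constant in t. -/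
/-- Second first integral of the Pais–Uhlenbeck oscillator, obtained from
nonlocal space-change perturbations. -/
theorem stmt_12
    (w₁ w₂ : ℝ) (hw₁ : 0 < w₁) (hw₂ : 0 < w₂)
    (q : ℝ → ℝ) (hq : ContDiff ℝ (⊤ : ℕ∞) q)
    (hEL : ∀ t : ℝ,
      iteratedDeriv 4 q t + (w₁ ^ 2 + w₂ ^ 2) * iteratedDeriv 2 q t
        + w₁ ^ 2 * w₂ ^ 2 * q t = 0) :
    ∃ c : ℝ, ∀ t : ℝ,
      (1 / 2) * ((w₁ ^ 4 + w₁ ^ 2 * w₂ ^ 2 + w₂ ^ 4) * (deriv q t) ^ 2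
        + (iteratedDeriv 3 q t) ^ 2
        + 2 * w₁ ^ 2 * w₂ ^ 2 * q t * iteratedDeriv 2 q t
        + (w₁ ^ 2 + w₂ ^ 2) * (2 * iteratedDeriv 3 q t * deriv q t
            + w₁ ^ 2 * w₂ ^ 2 * (q t) ^ 2)) = c := by
  have hd : ∀ n : ℕ, Differentiable ℝ (iteratedDeriv n q) := fun n =>
    hq.differentiable_iteratedDeriv n (by exact_mod_cast ENat.coe_lt_top n)
  set F : ℝ → ℝ := fun t =>
      (1 / 2) * ((w₁ ^ 4 + w₁ ^ 2 * w₂ ^ 2 + w₂ ^ 4) * (deriv q t) ^ 2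
        + (iteratedDeriv 3 q t) ^ 2
        + 2 * w₁ ^ 2 * w₂ ^ 2 * q t * iteratedDeriv 2 q t
        + (w₁ ^ 2 + w₂ ^ 2) * (2 * iteratedDeriv 3 q t * deriv q t
            + w₁ ^ 2 * w₂ ^ 2 * (q t) ^ 2)) with hF
  have h0 : deriv q = iteratedDeriv 1 q := iteratedDeriv_one.symm
  have key : ∀ t : ℝ, HasDerivAt F 0 t := by
    intro t
    have hder : ∀ n : ℕ, HasDerivAt (iteratedDeriv n q) (iteratedDeriv (n + 1) q t) t := by
      intro n
      rw [iteratedDeriv_succ]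
      exact (hd n t).hasDerivAt
    have h1 : HasDerivAt (iteratedDeriv 1 q) (iteratedDeriv 2 q t) t := hder 1
    have h2 : HasDerivAt (iteratedDeriv 2 q) (iteratedDeriv 3 q t) t := hder 2
    have h3 : HasDerivAt (iteratedDeriv 3 q) (iteratedDeriv 4 q t) t := hder 3
    have h0' : HasDerivAt q (iteratedDeriv 1 q t) t := by
      have := hder 0
      rwa [iteratedDeriv_zero] at this
    have hdq : HasDerivAt (fun s => deriv q s) (iteratedDeriv 2 q t) t := by
      rw [show (fun s => deriv q s) = iteratedDeriv 1 q from h0]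
      exact h1
    have hD := (((((hdq.pow 2).const_mul (w₁ ^ 4 + w₁ ^ 2 * w₂ ^ 2 + w₂ ^ 4)).add
          (h3.pow 2)).add
          ((h0'.const_mul (2 * w₁ ^ 2 * w₂ ^ 2)).mul h2)).add
          ((((h3.const_mul 2).mul hdq).add
            ((h0'.pow 2).const_mul (w₁ ^ 2 * w₂ ^ 2))).const_mul
              (w₁ ^ 2 + w₂ ^ 2))).const_mul (1 / 2)
    have hq4 : iteratedDeriv 4 q t
        = -((w₁ ^ 2 + w₂ ^ 2) * iteratedDeriv 2 q t + w₁ ^ 2 * w₂ ^ 2 * q t) := by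
      have := hEL t; linarith
    convert hD using 2
    case e'_4 => rfl
    case e'_5 => rfl
    case e'_8 => rfl
    push_cast
    rw [hq4, h0]
    ring
  refine ⟨F 0, fun t => ?_⟩
  have hc : F t = F 0 :=
    is_const_of_deriv_eq_zero (fun x => (key x).differentiableAt)
      (fun x => (key x).deriv) t 0
  simpa [hF] using hc
end

section
/- Let w₁, w₂ > 0 and let q = (q₁, q₂) : ℝ → ℝ² be a smooth solution of the planar Pais–Uhlenbeck system q⁽⁴⁾ + (w₁² + w₂²) q̈ + w₁²w₂² q = 0. Then the angular-momentum-like quantity K₃(t) = (w₁² + w₂²) det(q̇(t), q(t)) + det(q̇(t), q̈(t)) + det(q⁽³⁾(t), q(t)) is constant in t. -/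
/-- Angular-momentum-like first integral of the planar Pais–Uhlenbeck system:
`K₃ = (w₁²+w₂²) det(q̇, q) + det(q̇, q̈) + det(q⁽³⁾, q)` is constant, where
`det(a,b) = a₁b₂ − a₂b₁`. -/
theorem stmt_14
    (w₁ w₂ : ℝ) (hw₁ : 0 < w₁) (hw₂ : 0 < w₂)
    (q : ℝ → EuclideanSpace ℝ (Fin 2)) (hq : ContDiff ℝ (⊤ : ℕ∞) q)
    (hEL : ∀ t : ℝ,
      iteratedDeriv 4 q t + (w₁ ^ 2 + w₂ ^ 2) • iteratedDeriv 2 q t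
        + (w₁ ^ 2 * w₂ ^ 2) • q t = 0) :
    ∃ c : ℝ, ∀ t : ℝ,
      (w₁ ^ 2 + w₂ ^ 2) * (deriv q t 0 * q t 1 - deriv q t 1 * q t 0)
        + (deriv q t 0 * iteratedDeriv 2 q t 1 - deriv q t 1 * iteratedDeriv 2 q t 0)
        + (iteratedDeriv 3 q t 0 * q t 1 - iteratedDeriv 3 q t 1 * q t 0) = c := by
  have hsm : ∀ n : ℕ, ContDiff ℝ (⊤ : ℕ∞) (iteratedDeriv n q) := by
    intro n
    rw [iteratedDeriv_eq_iterate]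
    exact hq.iterate_deriv n
  have hd : ∀ (n : ℕ) (t : ℝ),
      HasDerivAt (iteratedDeriv n q) (iteratedDeriv (n + 1) q t) t := by
    intro n t
    have := ((hsm n).differentiable (by simp) t).hasDerivAt
    rwa [iteratedDeriv_succ]
  have hdc : ∀ (n : ℕ) (i : Fin 2) (t : ℝ),
      HasDerivAt (fun s => iteratedDeriv n q s i) (iteratedDeriv (n + 1) q t i) t := by
    intro n i t
    exact (EuclideanSpace.proj i).hasFDerivAt.comp_hasDerivAt t (hd n t)
  set A := w₁ ^ 2 + w₂ ^ 2 with hA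
  set B := w₁ ^ 2 * w₂ ^ 2 with hB
  set E : ℝ → ℝ := fun t =>
    A * (iteratedDeriv 1 q t 0 * iteratedDeriv 0 q t 1
          - iteratedDeriv 1 q t 1 * iteratedDeriv 0 q t 0)
      + (iteratedDeriv 1 q t 0 * iteratedDeriv 2 q t 1
          - iteratedDeriv 1 q t 1 * iteratedDeriv 2 q t 0)
      + (iteratedDeriv 3 q t 0 * iteratedDeriv 0 q t 1
          - iteratedDeriv 3 q t 1 * iteratedDeriv 0 q t 0) with hE
  have key : ∀ t : ℝ, HasDerivAt E 0 t := by
    intro t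
    have h4 : ∀ i : Fin 2, iteratedDeriv 4 q t i
        = -(A * iteratedDeriv 2 q t i + B * q t i) := by
      intro i
      have hi : (iteratedDeriv 4 q t + A • iteratedDeriv 2 q t + B • q t) i
          = (0 : EuclideanSpace ℝ (Fin 2)) i := by rw [hEL t]
      simp only [PiLp.add_apply, PiLp.smul_apply, PiLp.zero_apply, smul_eq_mul] at hi
      linarith
    have hD : HasDerivAt E
        (A * (iteratedDeriv 2 q t 0 * iteratedDeriv 0 q t 1
              + iteratedDeriv 1 q t 0 * iteratedDeriv 1 q t 1
              - (iteratedDeriv 2 q t 1 * iteratedDeriv 0 q t 0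
                  + iteratedDeriv 1 q t 1 * iteratedDeriv 1 q t 0))
          + (iteratedDeriv 2 q t 0 * iteratedDeriv 2 q t 1
              + iteratedDeriv 1 q t 0 * iteratedDeriv 3 q t 1
              - (iteratedDeriv 2 q t 1 * iteratedDeriv 2 q t 0
                  + iteratedDeriv 1 q t 1 * iteratedDeriv 3 q t 0))
          + (iteratedDeriv 4 q t 0 * iteratedDeriv 0 q t 1
              + iteratedDeriv 3 q t 0 * iteratedDeriv 1 q t 1
              - (iteratedDeriv 4 q t 1 * iteratedDeriv 0 q t 0
                  + iteratedDeriv 3 q t 1 * iteratedDeriv 1 q t 0))) t := by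
      exact
        (((((hdc 1 0 t).mul (hdc 0 1 t)).sub ((hdc 1 1 t).mul (hdc 0 0 t))).const_mul A).add
          (((hdc 1 0 t).mul (hdc 2 1 t)).sub ((hdc 1 1 t).mul (hdc 2 0 t)))).add
          (((hdc 3 0 t).mul (hdc 0 1 t)).sub ((hdc 3 1 t).mul (hdc 0 0 t)))
    have hzero :
        (A * (iteratedDeriv 2 q t 0 * iteratedDeriv 0 q t 1
              + iteratedDeriv 1 q t 0 * iteratedDeriv 1 q t 1
              - (iteratedDeriv 2 q t 1 * iteratedDeriv 0 q t 0
                  + iteratedDeriv 1 q t 1 * iteratedDeriv 1 q t 0))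
          + (iteratedDeriv 2 q t 0 * iteratedDeriv 2 q t 1
              + iteratedDeriv 1 q t 0 * iteratedDeriv 3 q t 1
              - (iteratedDeriv 2 q t 1 * iteratedDeriv 2 q t 0
                  + iteratedDeriv 1 q t 1 * iteratedDeriv 3 q t 0))
          + (iteratedDeriv 4 q t 0 * iteratedDeriv 0 q t 1
              + iteratedDeriv 3 q t 0 * iteratedDeriv 1 q t 1
              - (iteratedDeriv 4 q t 1 * iteratedDeriv 0 q t 0
                  + iteratedDeriv 3 q t 1 * iteratedDeriv 1 q t 0))) = 0 := by
      rw [h4 0, h4 1]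
      simp only [iteratedDeriv_zero]
      ring
    rwa [hzero] at hD
  have hconst : ∀ t : ℝ, E t = E 0 :=
    fun t => is_const_of_deriv_eq_zero
      (fun s => (key s).differentiableAt) (fun s => (key s).deriv) t 0
  refine ⟨E 0, fun t => ?_⟩
  have := hconst t
  simpa only [hE, iteratedDeriv_one, iteratedDeriv_zero] using this
end
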